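/- arXiv:0810.3353 — 5 statements merged into one kernel-verified Lean document; each statement's English description precedes it below -/
import Mathlib

section
/- Let m and n be natural numbers with m ≥ 5, n ≥ 5, m ≢ 2 (mod 4) and n ≢ 2 (mod 4). If the subfields ℚ(ζ_m + ζ_m⁻¹) and ℚ(ζ_n + ζ_n⁻¹) of ℂ are equal, then m = n. (In other words, distinct cyclotomic fields, normalized so that their conductor is not congruent to 2 modulo 4, have distinct maximal totally real subfields.) -/
open IntermediateField Polynomial

/-- Arithmetic core: if every `a ≡ 1 (mod m)` coprime to `mn` satisfies `a ≡ ±1 (mod n)`,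
and `n ≥ 5`, `n ≢ 2 (mod 4)`, then `n ∣ m`. -/
lemma nt_dvd_aux (m n : ℕ) (hm : m ≠ 0) (hn : 5 ≤ n) (hn4 : n % 4 ≠ 2)
    (H : ∀ a : ℕ, Nat.Coprime a (m * n) → a ≡ 1 [MOD m] → (a ≡ 1 [MOD n] ∨ n ∣ (a + 1))) :
    n ∣ m := by
  have hn0 : n ≠ 0 := by omega
  rw [← Nat.factorization_le_iff_dvd hn0 hm, Finsupp.le_def]
  intro p
  by_contra hcon
  push_neg at hcon
  set j := m.factorization p with hj
  set k := n.factorization p with hk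
  have hp : p.Prime := by
    by_contra hp
    rw [hk, Nat.factorization_eq_zero_of_not_prime n hp] at hcon
    omega
  have hk1 : 1 ≤ k := by omega
  -- exclude p = 2, k = 1
  have hp2 : ¬(p = 2 ∧ k = 1) := by
    rintro ⟨rfl, hk1'⟩
    have h1 : 2 ^ k * ordCompl[2] n = n := Nat.ordProj_mul_ordCompl_eq_self n 2
    have h2 : ¬ 2 ∣ ordCompl[2] n := Nat.not_dvd_ordCompl (by norm_num) hn0
    rw [hk1', pow_one] at h1
    omega
  set s := j + k with hs
  have hsf : (m * n).factorization p = s := by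
    rw [Nat.factorization_mul hm hn0]; rfl
  set t := ordCompl[p] (m * n) with ht
  have hst : p ^ s * t = m * n := by
    rw [← hsf]; exact Nat.ordProj_mul_ordCompl_eq_self _ p
  have hpt : Nat.Coprime p t := Nat.coprime_ordCompl hp (mul_ne_zero hm hn0)
  have hct : Nat.Coprime (p ^ s) t := hpt.pow_left s
  set c := if k = 1 then 2 else p ^ (k - 1) + 1 with hc
  have hcp : Nat.Coprime c p := by
    rcases eq_or_ne k 1 with h1 | h1
    · have hpo : p ≠ 2 := fun h2 => hp2 ⟨h2, h1⟩
      simp only [hc, h1, if_pos rfl]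
      exact (Nat.coprime_primes Nat.prime_two hp).mpr (Ne.symm hpo)
    · simp only [hc, if_neg h1]
      refine Nat.Coprime.symm ((Nat.Prime.coprime_iff_not_dvd hp).mpr ?_)
      intro hdvd
      have h3 : p ∣ p ^ (k - 1) := dvd_pow_self p (by omega)
      have := (Nat.dvd_add_right h3).mp hdvd
      have := Nat.le_of_dvd one_pos this
      have := hp.one_lt
      omega
  have hcj : c ≡ 1 [MOD p ^ j] := by
    rcases eq_or_ne k 1 with h1 | h1
    · have : j = 0 := by omega
      simp [this, Nat.modEq_one]
    · simp only [hc, if_neg h1]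
      have : p ^ j ∣ p ^ (k - 1) := pow_dvd_pow p (by omega)
      exact ((Nat.modEq_iff_dvd' (by omega)).mpr (by simpa using this)).symm
  have hck : ¬ (c ≡ 1 [MOD p ^ k]) := by
    rcases eq_or_ne k 1 with h1 | h1
    · simp only [hc, h1, if_pos rfl, pow_one]
      intro hmod
      have := (Nat.modEq_iff_dvd' (by norm_num)).mp hmod.symm
      simp at this
      exact absurd this hp.one_lt.ne'
    · simp only [hc, if_neg h1]
      intro hmod
      have h2 := (Nat.modEq_iff_dvd' (by omega)).mp hmod.symm
      simp only [Nat.add_sub_cancel_left, Nat.add_sub_cancel] at h2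
      have := (Nat.pow_dvd_pow_iff_le_right hp.one_lt).mp h2
      omega
  obtain ⟨a, hac, hat⟩ := Nat.chineseRemainder hct c 1
  have hacop : Nat.Coprime a (m * n) := by
    rw [← hst]
    refine Nat.Coprime.mul_right ?_ ?_
    · have hg : Nat.gcd a (p ^ s) = Nat.gcd c (p ^ s) := hac.gcd_eq
      unfold Nat.Coprime
      rw [hg]
      exact (hcp.pow_right s)
    · unfold Nat.Coprime
      rw [hat.gcd_eq]
      simp
  have hmfac : p ^ j * ordCompl[p] m = m := Nat.ordProj_mul_ordCompl_eq_self m p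
  have hmt : ordCompl[p] m ∣ t := by
    rw [ht, Nat.ordCompl_mul]
    exact dvd_mul_right _ _
  have ham : a ≡ 1 [MOD m] := by
    rw [← hmfac]
    have co : Nat.Coprime (p ^ j) (ordCompl[p] m) := (Nat.coprime_ordCompl hp hm).pow_left _
    rw [← Nat.modEq_and_modEq_iff_modEq_mul co]
    constructor
    · exact (hac.of_dvd (pow_dvd_pow p (by omega))).trans hcj
    · exact hat.of_dvd hmt
  have hnfac : p ^ k * ordCompl[p] n = n := Nat.ordProj_mul_ordCompl_eq_self n p
  set n1 := ordCompl[p] n with hn1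
  have hks : k ≤ s := by omega
  rcases H a hacop ham with h1 | h1
  · -- a ≡ 1 mod n, so c ≡ 1 mod p^k, contradiction
    have hpk : p ^ k ∣ n := by rw [← hnfac]; exact dvd_mul_right _ _
    exact hck (((hac.of_dvd (pow_dvd_pow p hks)).symm.trans (h1.of_dvd hpk)))
  · -- n ∣ a + 1
    have hn1t : n1 ∣ t := by
      rw [ht, Nat.ordCompl_mul]
      exact dvd_mul_left _ _
    have hpk1 : p ^ k ∣ a + 1 := dvd_trans (by rw [← hnfac]; exact dvd_mul_right _ _) h1
    have hn11 : n1 ∣ a + 1 := dvd_trans (by rw [← hnfac]; exact dvd_mul_left _ _) h1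
    have h2 : n1 ∣ 2 := by
      have hmod : (2 : ℕ) ≡ 0 [MOD n1] :=
        (((hat.of_dvd hn1t).add_right 1).symm).trans ((Nat.modEq_zero_iff_dvd).mpr hn11)
      exact (Nat.modEq_zero_iff_dvd).mp hmod
    have hpc1 : p ^ k ∣ c + 1 := by
      have hmod : c + 1 ≡ 0 [MOD p ^ k] :=
        (((hac.of_dvd (pow_dvd_pow p hks)).symm).add_right 1).trans
          ((Nat.modEq_zero_iff_dvd).mpr hpk1)
      exact (Nat.modEq_zero_iff_dvd).mp hmod
    rcases (Nat.dvd_prime Nat.prime_two).mp h2 with hn12 | hn12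
    all_goals rcases eq_or_ne k 1 with hke | hke
    -- four cases; in each derive contradiction
    · -- n1 = 1, k = 1 : n = p, c = 2, p ∣ 3
      simp only [hc, hke, if_pos rfl, pow_one] at hpc1
      have hp3 : p = 3 := (Nat.prime_dvd_prime_iff_eq hp (by norm_num)).mp hpc1
      rw [hke, pow_one, hn12, mul_one, hp3] at hnfac
      omega
    · -- n1 = 1, k ≥ 2
      simp only [hc, if_neg hke] at hpc1
      have h3 : p ∣ 2 := by
        have h4 : p ∣ p ^ (k - 1) := dvd_pow_self p (by omega)
        have h5 : p ∣ p ^ k := dvd_pow_self p (by omega)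
        have h6 : p ∣ p ^ (k - 1) + 1 + 1 := h5.trans hpc1
        have : p ∣ 1 + 1 := (Nat.dvd_add_right h4).mp (by rwa [add_assoc] at h6)
        simpa using this
      have hp2' : p = 2 := (Nat.prime_dvd_prime_iff_eq hp Nat.prime_two).mp h3
      subst hp2'
      rcases eq_or_ne k 2 with hk2 | hk2
      · -- n = 4
        rw [hk2, hn12, mul_one] at hnfac
        omega
      · have hk3 : 3 ≤ k := by omega
        have h4 : (4 : ℕ) ∣ 2 ^ k := by
          have : (2 : ℕ) ^ 2 ∣ 2 ^ k := pow_dvd_pow 2 (by omega)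
          simpa using this
        have h5 : (4 : ℕ) ∣ 2 ^ (k - 1) := by
          have : (2 : ℕ) ^ 2 ∣ 2 ^ (k - 1) := pow_dvd_pow 2 (by omega)
          simpa using this
        have h6 : (4 : ℕ) ∣ 2 ^ (k - 1) + 1 + 1 := h4.trans hpc1
        omega
    · -- n1 = 2, k = 1 : c = 2, p ∣ 3, n = 3 * 2 = 6
      simp only [hc, hke, if_pos rfl, pow_one] at hpc1
      have hp3 : p = 3 := (Nat.prime_dvd_prime_iff_eq hp (by norm_num)).mp hpc1
      rw [hke, pow_one, hn12, hp3] at hnfac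
      omega
    · -- n1 = 2, k ≥ 2 : p = 2 as before, but n1 = 2 contradicts coprimality
      simp only [hc, if_neg hke] at hpc1
      have h3 : p ∣ 2 := by
        have h4 : p ∣ p ^ (k - 1) := dvd_pow_self p (by omega)
        have h5 : p ∣ p ^ k := dvd_pow_self p (by omega)
        have h6 : p ∣ p ^ (k - 1) + 1 + 1 := h5.trans hpc1
        have : p ∣ 1 + 1 := (Nat.dvd_add_right h4).mp (by rwa [add_assoc] at h6)
        simpa using this
      have hp2' : p = 2 := (Nat.prime_dvd_prime_iff_eq hp Nat.prime_two).mp h3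
      have hodd : ¬ p ∣ n1 := Nat.not_dvd_ordCompl hp hn0
      rw [hp2', hn12] at hodd
      exact hodd dvd_rfl


lemma key_cong (m n : ℕ) (hm : 2 ≤ m) (hn : 2 ≤ n) (ζ : ℂ)
    (hζ : IsPrimitiveRoot ζ (m * n))
    (hmem : ζ ^ m + (ζ ^ m)⁻¹ ∈ ℚ⟮ζ ^ n + (ζ ^ n)⁻¹⟯)
    (a : ℕ) (ha : Nat.Coprime a (m * n)) (ham : a ≡ 1 [MOD m]) :
    a ≡ 1 [MOD n] ∨ n ∣ (a + 1) := by
  have hN : m * n ≠ 0 := by positivity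
  have hNpos : 0 < m * n := Nat.pos_of_ne_zero hN
  have hζ0 : ζ ≠ 0 := hζ.ne_zero hN
  have hζm : IsPrimitiveRoot (ζ ^ n) m := hζ.pow hNpos (mul_comm m n)
  have hζn : IsPrimitiveRoot (ζ ^ m) n := hζ.pow hNpos rfl
  have hint : IsIntegral ℚ ζ := by
    refine ⟨X ^ (m * n) - C 1, monic_X_pow_sub_C 1 hN, ?_⟩
    simp [hζ.pow_eq_one]
  set K : IntermediateField ℚ ℂ := ℚ⟮ζ⟯ with hK
  set g : K := AdjoinSimple.gen ℚ ζ with hg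
  set pb := IntermediateField.adjoin.powerBasis hint with hpb
  have hroot : aeval (ζ ^ a) (minpoly ℚ pb.gen) = 0 := by
    rw [hpb, IntermediateField.adjoin.powerBasis_gen]
    erw [IntermediateField.minpoly_gen]
    rw [← Polynomial.cyclotomic_eq_minpoly_rat hζ hNpos]
    have hprim : IsPrimitiveRoot (ζ ^ a) (m * n) := hζ.pow_of_coprime a ha
    have h2 := hprim.isRoot_cyclotomic hNpos
    rw [Polynomial.IsRoot.def] at h2
    rw [aeval_def, Polynomial.eval₂_eq_eval_map, Polynomial.map_cyclotomic]
    exact h2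
  set φ : K →ₐ[ℚ] ℂ := pb.lift (ζ ^ a) hroot with hφ
  have hφg : φ g = ζ ^ a := by
    rw [hg, ← IntermediateField.adjoin.powerBasis_gen hint, ← hpb]
    exact pb.lift_gen (ζ ^ a) hroot
  have hvalg : K.val g = ζ := rfl
  set E : IntermediateField ℚ K :=
    { AlgHom.equalizer φ K.val with
      inv_mem' := fun {x} hx => by
        have hx' : φ x = K.val x := hx
        show φ x⁻¹ = K.val x⁻¹
        rw [map_inv₀, map_inv₀, hx'] } with hE
  have hmemE : ∀ x : K, x ∈ E ↔ φ x = K.val x := fun x => Iff.rfl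
  have hpowa : (ζ ^ n) ^ a = ζ ^ n := by
    obtain ⟨q, hq⟩ : ∃ q, a = m * q + 1 := by
      have h1 : a % m = 1 % m := ham
      have h2 : 1 % m = 1 := Nat.mod_eq_of_lt (by omega)
      have h3 := Nat.div_add_mod a m
      rw [h1, h2] at h3
      exact ⟨a / m, h3.symm⟩
    rw [hq, pow_add, pow_one, pow_mul]
    rw [show ((ζ ^ n) ^ m) = 1 from by rw [← pow_mul, mul_comm n m]; exact hζ.pow_eq_one]
    simp
  have hxE : g ^ n + (g ^ n)⁻¹ ∈ E := by
    rw [hmemE]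
    simp only [map_add, map_inv₀, map_pow]
    rw [hφg, hvalg, ← pow_mul, mul_comm a n, pow_mul, hpowa]
  have hsub : ℚ⟮g ^ n + (g ^ n)⁻¹⟯ ≤ E := by
    rw [adjoin_simple_le_iff]; exact hxE
  have hyK : g ^ m + (g ^ m)⁻¹ ∈ ℚ⟮g ^ n + (g ^ n)⁻¹⟯ := by
    have hmap : (ℚ⟮g ^ n + (g ^ n)⁻¹⟯).map K.val = ℚ⟮ζ ^ n + (ζ ^ n)⁻¹⟯ := by
      have himg : K.val (g ^ n + (g ^ n)⁻¹) = ζ ^ n + (ζ ^ n)⁻¹ := by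
        simp only [map_add, map_inv₀, map_pow]; rw [hvalg]
      erw [IntermediateField.adjoin_map, Set.image_singleton, himg]
    have hmem2 : K.val (g ^ m + (g ^ m)⁻¹) ∈ (ℚ⟮g ^ n + (g ^ n)⁻¹⟯).map K.val := by
      rw [hmap]
      have himg2 : K.val (g ^ m + (g ^ m)⁻¹) = ζ ^ m + (ζ ^ m)⁻¹ := by
        simp only [map_add, map_inv₀, map_pow]; rw [hvalg]
      rw [himg2]
      exact hmem
    obtain ⟨u, hu, huv⟩ := hmem2
    have heqU : u = g ^ m + (g ^ m)⁻¹ := by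
      apply Subtype.ext
      exact huv
    rwa [← heqU]
  have hyE : g ^ m + (g ^ m)⁻¹ ∈ E := hsub hyK
  have heq : (ζ ^ m) ^ a + ((ζ ^ m) ^ a)⁻¹ = ζ ^ m + (ζ ^ m)⁻¹ := by
    have h3 : φ (g ^ m + (g ^ m)⁻¹) = K.val (g ^ m + (g ^ m)⁻¹) := hyE
    simp only [map_add, map_inv₀, map_pow] at h3
    rw [hφg, hvalg, ← pow_mul, mul_comm a m, pow_mul] at h3
    exact h3
  set v := ζ ^ m with hv
  set u := v ^ a with hu
  have hv0 : v ≠ 0 := pow_ne_zero _ hζ0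
  have hu0 : u ≠ 0 := pow_ne_zero _ hv0
  have hfac : (u - v) * (u * v - 1) = 0 := by
    field_simp at heq
    linear_combination heq
  rcases mul_eq_zero.mp hfac with h0 | h0
  · left
    have huv : v ^ a = v := sub_eq_zero.mp h0
    have ha1 : 1 ≤ a := by
      rcases Nat.eq_zero_or_pos a with rfl | hpos
      · rw [pow_zero] at huv
        exact absurd huv.symm (hζn.ne_one (by omega))
      · exact hpos
    have h5 : v ^ (a - 1) = 1 := by
      have h6 : v ^ (a - 1) * v = 1 * v := by
        rw [one_mul, ← pow_succ, Nat.sub_add_cancel ha1, huv]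
      exact mul_right_cancel₀ hv0 h6
    have hdvd : n ∣ a - 1 := (hζn.pow_eq_one_iff_dvd _).mp h5
    exact Or.inl (((Nat.modEq_iff_dvd' ha1).mpr hdvd).symm) |>.elim id id
  · right
    have huv : v ^ (a + 1) = 1 := by
      rw [pow_succ]
      have := sub_eq_zero.mp h0
      exact this
    exact (hζn.pow_eq_one_iff_dvd _).mp huv

set_option maxHeartbeats 1000000 in
/-- Distinct cyclotomic fields (normalized so that the conductor is not `2 mod 4`)
have distinct maximal totally real subfields: if `m, n ≥ 5`, `m, n ≢ 2 (mod 4)`, and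
`ℚ(ζ_m + ζ_m⁻¹) = ℚ(ζ_n + ζ_n⁻¹)` as subfields of `ℂ`, then `m = n`. -/
theorem maximal_real_subfield_determines_conductor
    (m n : ℕ) (hm : 5 ≤ m) (hn : 5 ≤ n)
    (hm4 : m % 4 ≠ 2) (hn4 : n % 4 ≠ 2)
    (ζm : ℂ) (hζm : ζm = Complex.exp (2 * Real.pi * Complex.I / m))
    (ζn : ℂ) (hζn : ζn = Complex.exp (2 * Real.pi * Complex.I / n))
    (h : ℚ⟮ζm + ζm⁻¹⟯ = ℚ⟮ζn + ζn⁻¹⟯) :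
    m = n := by
  have hmc : (m : ℂ) ≠ 0 := Nat.cast_ne_zero.mpr (by omega)
  have hnc : (n : ℂ) ≠ 0 := Nat.cast_ne_zero.mpr (by omega)
  have hN : m * n ≠ 0 := by positivity
  set ζ : ℂ := Complex.exp (2 * Real.pi * Complex.I / ((m * n : ℕ) : ℂ)) with hζdef
  have hζ : IsPrimitiveRoot ζ (m * n) := Complex.isPrimitiveRoot_exp _ hN
  have hζ' : IsPrimitiveRoot ζ (n * m) := by rwa [mul_comm n m]
  have hpowm : ζ ^ n = ζm := by
    rw [hζm, hζdef, ← Complex.exp_nat_mul]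
    congr 1
    have : ((m * n : ℕ) : ℂ) = (m : ℂ) * n := by push_cast; ring
    rw [this]
    field_simp
  have hpown : ζ ^ m = ζn := by
    rw [hζn, hζdef, ← Complex.exp_nat_mul]
    congr 1
    have : ((m * n : ℕ) : ℂ) = (m : ℂ) * n := by push_cast; ring
    rw [this]
    field_simp
  have hmem1 : ζ ^ m + (ζ ^ m)⁻¹ ∈ ℚ⟮ζ ^ n + (ζ ^ n)⁻¹⟯ := by
    rw [hpowm, hpown, h]
    exact mem_adjoin_simple_self ℚ _
  have hmem2 : ζ ^ n + (ζ ^ n)⁻¹ ∈ ℚ⟮ζ ^ m + (ζ ^ m)⁻¹⟯ := by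
    rw [hpowm, hpown, ← h]
    exact mem_adjoin_simple_self ℚ _
  have H1 : ∀ a : ℕ, Nat.Coprime a (m * n) → a ≡ 1 [MOD m] → (a ≡ 1 [MOD n] ∨ n ∣ (a + 1)) :=
    fun a ha h1 => key_cong m n (by omega) (by omega) ζ hζ hmem1 a ha h1
  have H2 : ∀ a : ℕ, Nat.Coprime a (n * m) → a ≡ 1 [MOD n] → (a ≡ 1 [MOD m] ∨ m ∣ (a + 1)) :=
    fun a ha h1 => key_cong n m (by omega) (by omega) ζ hζ' hmem2 a ha h1
  have d1 : n ∣ m := nt_dvd_aux m n (by omega) hn hn4 H1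
  have d2 : m ∣ n := nt_dvd_aux n m (by omega) hm hm4 H2
  exact Nat.dvd_antisymm d2 d1
end

section
/- Let m and n be positive integers with n < m, and suppose m, n ∉ {1, 2, 3, 4, 6}. If the subfields ℚ(ζ_m + ζ_m⁻¹) and ℚ(ζ_n + ζ_n⁻¹) of ℂ are equal, then n is odd and m = 2n. -/
open Polynomial IntermediateField

lemma pow_mod_prim {k : ℕ} {ξ : ℂ} (hξ : IsPrimitiveRoot ξ k) (b : ℕ) :
    ξ ^ b = ξ ^ (b % k) := by
  conv_lhs => rw [← Nat.div_add_mod b k]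
  rw [pow_add, pow_mul, hξ.pow_eq_one, one_pow, one_mul]

lemma prim_pow_eq_pow {k a b : ℕ} {ξ : ℂ} (hξ : IsPrimitiveRoot ξ k) (hk : 0 < k)
    (h : ξ ^ a = ξ ^ b) : a ≡ b [MOD k] := by
  exact hξ.pow_inj (Nat.mod_lt a hk) (Nat.mod_lt b hk)
    (by rw [← pow_mod_prim hξ, ← pow_mod_prim hξ, h])

lemma sum_char {k a : ℕ} {ξ : ℂ} (hξ : IsPrimitiveRoot ξ k) (hk : 0 < k)
    (hsum : ξ ^ a + (ξ ^ a)⁻¹ = ξ + ξ⁻¹) :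
    a ≡ 1 [MOD k] ∨ a ≡ k - 1 [MOD k] := by
  have hξ0 : ξ ≠ 0 := hξ.ne_zero hk.ne'
  have hw0 : ξ ^ a ≠ 0 := pow_ne_zero _ hξ0
  have h1 : ξ * ξ⁻¹ = 1 := mul_inv_cancel₀ hξ0
  have h2 : ξ ^ a * (ξ ^ a)⁻¹ = 1 := mul_inv_cancel₀ hw0
  have key : (ξ ^ a - ξ) * (ξ ^ a - ξ⁻¹) = 0 := by
    linear_combination (ξ ^ a) * hsum - h2 + h1
  have hinv : ξ⁻¹ = ξ ^ (k - 1) := by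
    refine (eq_inv_of_mul_eq_one_left ?_).symm
    rw [← pow_succ]
    have hk1 : k - 1 + 1 = k := by omega
    rw [hk1, hξ.pow_eq_one]
  rcases mul_eq_zero.mp key with h | h
  · exact Or.inl (prim_pow_eq_pow hξ hk (by rw [pow_one]; exact sub_eq_zero.mp h))
  · exact Or.inr (prim_pow_eq_pow hξ hk (by rw [← hinv]; exact sub_eq_zero.mp h))

lemma inv_eq_pow_sub_one {k : ℕ} {ξ : ℂ} (hξ : IsPrimitiveRoot ξ k) (hk : 0 < k) :
    ξ⁻¹ = ξ ^ (k - 1) := by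
  refine (eq_inv_of_mul_eq_one_left ?_).symm
  rw [← pow_succ]
  have hk1 : k - 1 + 1 = k := by omega
  rw [hk1, hξ.pow_eq_one]

lemma star_lemma {l m n : ℕ} (hl : 0 < l) (hm : 0 < m) (hn : 0 < n)
    (hml : m ∣ l) (hnl : n ∣ l) {ζ : ℂ} (hζ : IsPrimitiveRoot ζ l)
    (hmem : ζ ^ (l / m) + (ζ ^ (l / m))⁻¹ ∈ ℚ⟮ζ ^ (l / n) + (ζ ^ (l / n))⁻¹⟯)
    (a : ℕ) (ha : a.Coprime l)
    (han : a ≡ 1 [MOD n] ∨ a ≡ n - 1 [MOD n]) :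
    a ≡ 1 [MOD m] ∨ a ≡ m - 1 [MOD m] := by
  have hζm : IsPrimitiveRoot (ζ ^ (l / m)) m := hζ.pow hl (Nat.div_mul_cancel hml).symm
  have hζn : IsPrimitiveRoot (ζ ^ (l / n)) n := hζ.pow hl (Nat.div_mul_cancel hnl).symm
  set ζm := ζ ^ (l / m) with hζmdef
  set ζn := ζ ^ (l / n) with hζndef
  -- get polynomial P
  have hintn : IsIntegral ℚ (ζn + ζn⁻¹) := by
    have h1 : IsIntegral ℚ ζn := (hζn.isIntegral hn).tower_top
    have h2 : IsIntegral ℚ ζn⁻¹ := by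
      rw [inv_eq_pow_sub_one hζn hn]; exact h1.pow _
    exact h1.add h2
  have hmem' : ζm + ζm⁻¹ ∈ Algebra.adjoin ℚ {ζn + ζn⁻¹} := by
    have := IntermediateField.adjoin_simple_toSubalgebra_of_isAlgebraic (F := ℚ) hintn.isAlgebraic
    have h2 : ζm + ζm⁻¹ ∈ (ℚ⟮ζn + ζn⁻¹⟯).toSubalgebra := hmem
    rwa [this] at h2
  rw [Algebra.adjoin_singleton_eq_range_aeval] at hmem'
  obtain ⟨P, hP'⟩ := hmem'
  have hP : aeval (ζn + ζn⁻¹) P = ζm + ζm⁻¹ := hP'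
  -- the relation polynomial
  set R : ℚ[X] := X ^ (l / m) + X ^ ((l / m) * (m - 1))
      - P.comp (X ^ (l / n) + X ^ ((l / n) * (n - 1))) with hR
  have hRζ : aeval ζ R = 0 := by
    have e1 : aeval ζ (X ^ (l / m) + X ^ ((l / m) * (m - 1)) : ℚ[X]) = ζm + ζm⁻¹ := by
      rw [inv_eq_pow_sub_one hζm hm]
      simp [hζmdef, pow_mul]
    have e2 : aeval ζ (X ^ (l / n) + X ^ ((l / n) * (n - 1)) : ℚ[X]) = ζn + ζn⁻¹ := by
      rw [inv_eq_pow_sub_one hζn hn]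
      simp [hζndef, pow_mul]
    rw [hR, map_sub, map_add, aeval_comp, e2, hP]
    simp [hζmdef, pow_mul, ← inv_eq_pow_sub_one hζm hm]
    exact sub_eq_zero.mpr (inv_eq_pow_sub_one hζm hm).symm
  have hdvd : minpoly ℚ ζ ∣ R := minpoly.dvd ℚ ζ hRζ
  have hζa : IsPrimitiveRoot (ζ ^ a) l := hζ.pow_of_coprime a ha
  have hmineq : minpoly ℚ ζ = minpoly ℚ (ζ ^ a) := by
    rw [← Polynomial.cyclotomic_eq_minpoly_rat hζ hl,
        Polynomial.cyclotomic_eq_minpoly_rat hζa hl]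
  have hRζa : aeval (ζ ^ a) R = 0 := by
    obtain ⟨T, hT⟩ := hdvd
    rw [hT, map_mul, hmineq, minpoly.aeval, zero_mul]
  -- unpack
  have hexp1 : (ζ ^ a) ^ (l / m) = ζm ^ a := by
    rw [hζmdef, ← pow_mul, ← pow_mul, mul_comm]
  have hexp2 : (ζ ^ a) ^ (l / n) = ζn ^ a := by
    rw [hζndef, ← pow_mul, ← pow_mul, mul_comm]
  have ham : a.Coprime m := Nat.Coprime.coprime_dvd_right hml ha
  have hann : a.Coprime n := Nat.Coprime.coprime_dvd_right hnl ha
  have hwm : IsPrimitiveRoot (ζm ^ a) m := hζm.pow_of_coprime a ham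
  have hwn : IsPrimitiveRoot (ζn ^ a) n := hζn.pow_of_coprime a hann
  have hRval : (ζm ^ a) + (ζm ^ a)⁻¹ - aeval (ζn ^ a + (ζn ^ a)⁻¹) P = 0 := by
    have := hRζa
    rw [hR, map_sub, map_add, aeval_comp] at this
    simp only [map_add, map_pow, aeval_X] at this
    rw [pow_mul, pow_mul, hexp1, hexp2, ← pow_mul, ← pow_mul] at this
    rw [inv_eq_pow_sub_one hwm hm, inv_eq_pow_sub_one hwn hn]
    rw [← pow_mul, ← pow_mul] at this ⊢
    convert this using 4
    ring
  -- now use han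
  have hsn : ζn ^ a + (ζn ^ a)⁻¹ = ζn + ζn⁻¹ := by
    rcases han with h1 | h1
    · have : ζn ^ a = ζn ^ 1 := by
        rw [pow_mod_prim hζn a, pow_mod_prim hζn 1, h1]
      rw [this, pow_one]
    · have : ζn ^ a = ζn ^ (n - 1) := by
        rw [pow_mod_prim hζn a, pow_mod_prim hζn (n-1), h1]
      rw [this, ← inv_eq_pow_sub_one hζn hn, inv_inv, add_comm]
  rw [hsn, hP] at hRval
  have hsum : ζm ^ a + (ζm ^ a)⁻¹ = ζm + ζm⁻¹ := by
    have := sub_eq_zero.mp hRval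
    exact this
  exact sum_char hζm hm hsum

lemma coprime_of_modEq {a b k : ℕ} (h : a ≡ b [MOD k]) (hb : b.Coprime k) : a.Coprime k := by
  have h1 : Nat.gcd k a = Nat.gcd k b := by
    rw [Nat.gcd_rec k a, Nat.gcd_rec k b, h]
  have h2 := hb
  unfold Nat.Coprime at *
  rw [Nat.gcd_comm] at h2 ⊢
  omega


lemma exists_nontrivial_unit {m : ℕ} (hm : 0 < m) (hm' : m ∉ ({1, 2, 3, 4, 6} : Set ℕ)) :
    ∃ u, u.Coprime m ∧ ¬ u ≡ 1 [MOD m] ∧ ¬ u ≡ m - 1 [MOD m] := by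
  simp only [Set.mem_insert_iff, Set.mem_singleton_iff, not_or] at hm'
  obtain ⟨h1, h2, h3, h4, h6⟩ := hm'
  have hm5 : 5 ≤ m := by omega
  have key : ∀ u, u < m → u ≠ 1 → u ≠ m - 1 →
      (¬ u ≡ 1 [MOD m] ∧ ¬ u ≡ m - 1 [MOD m]) := by
    intro u hu hu1 hu2
    constructor
    · intro hc
      rw [Nat.ModEq, Nat.mod_eq_of_lt hu, Nat.mod_eq_of_lt (by omega)] at hc
      exact hu1 hc
    · intro hc
      rw [Nat.ModEq, Nat.mod_eq_of_lt hu, Nat.mod_eq_of_lt (by omega)] at hc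
      exact hu2 hc
  rcases Nat.even_or_odd m with hev | hod
  · obtain ⟨m₁, hm₁'⟩ := hev
    have hm₁ : m = 2 * m₁ := by omega
    rcases Nat.even_or_odd m₁ with he1 | ho1
    · -- 4 ∣ m : u = m₁ + 1
      refine ⟨m₁ + 1, ?_, key _ (by omega) (by omega) (by omega)⟩
      have hodd : ¬ 2 ∣ (m₁ + 1) := by
        obtain ⟨t, ht⟩ := he1; omega
      have hd : Nat.gcd (m₁ + 1) m ∣ 2 := by
        have d1 : Nat.gcd (m₁ + 1) m ∣ m₁ + 1 := Nat.gcd_dvd_left _ _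
        have d2 : Nat.gcd (m₁ + 1) m ∣ m := Nat.gcd_dvd_right _ _
        have d3 : Nat.gcd (m₁ + 1) m ∣ 2 * (m₁ + 1) - m :=
          Nat.dvd_sub (Dvd.dvd.mul_left d1 2) d2
        have he : 2 * (m₁ + 1) - m = 2 := by omega
        rwa [he] at d3
      have hne2 : ¬ 2 ∣ Nat.gcd (m₁ + 1) m := fun hc => hodd (hc.trans (Nat.gcd_dvd_left _ _))
      have hle := Nat.le_of_dvd (by norm_num) hd
      have hpos : 0 < Nat.gcd (m₁ + 1) m := Nat.gcd_pos_of_pos_right _ hm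
      show Nat.gcd (m₁ + 1) m = 1
      omega
    · -- m ≡ 2 mod 4 : u = m₁ + 2, m₁ odd, m₁ ≥ 5
      have hm₁5 : 5 ≤ m₁ := by rcases ho1 with ⟨t, ht⟩; omega
      refine ⟨m₁ + 2, ?_, key _ (by omega) (by omega) (by omega)⟩
      have hodd : ¬ 2 ∣ (m₁ + 2) := by rcases ho1 with ⟨t, ht⟩; omega
      have hd : Nat.gcd (m₁ + 2) m ∣ 4 := by
        have d1 : Nat.gcd (m₁ + 2) m ∣ m₁ + 2 := Nat.gcd_dvd_left _ _
        have d2 : Nat.gcd (m₁ + 2) m ∣ m := Nat.gcd_dvd_right _ _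
        have d3 : Nat.gcd (m₁ + 2) m ∣ 2 * (m₁ + 2) - m :=
          Nat.dvd_sub (Dvd.dvd.mul_left d1 2) d2
        have he : 2 * (m₁ + 2) - m = 4 := by omega
        rwa [he] at d3
      have hne2 : ¬ 2 ∣ Nat.gcd (m₁ + 2) m := fun hc => hodd (hc.trans (Nat.gcd_dvd_left _ _))
      have hne3 : Nat.gcd (m₁ + 2) m ≠ 3 := by
        intro hc; rw [hc] at hd; norm_num at hd
      have hle := Nat.le_of_dvd (by norm_num) hd
      have hpos : 0 < Nat.gcd (m₁ + 2) m := Nat.gcd_pos_of_pos_right _ hm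
      show Nat.gcd (m₁ + 2) m = 1
      omega
  · -- m odd : u = m - 2
    refine ⟨m - 2, ?_, key _ (by omega) (by omega) (by omega)⟩
    have hd : Nat.gcd (m - 2) m ∣ 2 := by
      have d1 : Nat.gcd (m - 2) m ∣ m - 2 := Nat.gcd_dvd_left _ _
      have d2 : Nat.gcd (m - 2) m ∣ m := Nat.gcd_dvd_right _ _
      have d3 := Nat.dvd_sub d2 d1
      have he : m - (m - 2) = 2 := by omega
      rwa [he] at d3
    have hne2 : ¬ 2 ∣ Nat.gcd (m - 2) m := by
      intro hc
      have := hc.trans (Nat.gcd_dvd_right (m - 2) m)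
      rcases hod with ⟨t, ht⟩; omega
    have hle := Nat.le_of_dvd (by norm_num) hd
    have hpos : 0 < Nat.gcd (m - 2) m := Nat.gcd_pos_of_pos_right _ hm
    show Nat.gcd (m - 2) m = 1
    omega

lemma totient_eq_of_dvd {n l : ℕ} (hn : 0 < n) (hl : 0 < l) (hnl : n ∣ l)
    (h : Nat.totient l = Nat.totient n) : l = n ∨ (l = 2 * n ∧ Odd n) := by
  obtain ⟨k, rfl⟩ := hnl
  have hk : 0 < k := Nat.pos_of_ne_zero (by rintro rfl; simp at hl)
  have h1 := Nat.totient_super_multiplicative n k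
  rw [h] at h1
  have hφn : 0 < Nat.totient n := Nat.totient_pos.mpr hn
  have hφk : Nat.totient k ≤ 1 := by nlinarith
  have hdk := Nat.dvd_two_of_totient_le_one hk hφk
  rcases (Nat.dvd_prime Nat.prime_two).mp hdk with rfl | rfl
  · left; ring
  · right
    refine ⟨by ring, ?_⟩
    by_contra hodd
    rw [Nat.not_odd_iff_even] at hodd
    have hdvd : 2 ∣ n := hodd.two_dvd
    have h2 := Nat.totient_mul_of_prime_of_dvd Nat.prime_two hdvd
    rw [show n * 2 = 2 * n by ring] at h
    omega

lemma mix_contra {m n L : ℕ} (hm : 0 < m) (hm' : m ∉ ({1, 2, 3, 4, 6} : Set ℕ))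
    (star : ∀ a : ℕ, a.Coprime L → (a ≡ 1 [MOD n] ∨ a ≡ n - 1 [MOD n]) →
      (a ≡ 1 [MOD m] ∨ a ≡ m - 1 [MOD m]))
    (n' : ℕ) (hcop : Nat.Coprime m n') (hLl : L ∣ m * n')
    (hlift : ∀ a : ℕ, a.Coprime m → a ≡ 1 [MOD n'] → a ≡ 1 [MOD n]) : False := by
  obtain ⟨u, hu, hu1, hu2⟩ := exists_nontrivial_unit hm hm'
  obtain ⟨k, hku, hk1⟩ := Nat.chineseRemainder hcop u 1
  have hkm : k.Coprime m := coprime_of_modEq hku hu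
  have hkn' : k.Coprime n' := coprime_of_modEq hk1 (Nat.coprime_one_left n')
  have hkL : k.Coprime L := Nat.Coprime.coprime_dvd_right hLl (hkm.mul_right hkn')
  have hkn : k ≡ 1 [MOD n] := hlift k hkm hk1
  rcases star k hkL (Or.inl hkn) with hcase | hcase
  · exact hu1 (hku.symm.trans hcase)
  · exact hu2 (hku.symm.trans hcase)

lemma odd_of_coprime_even {a N : ℕ} (h2N : 2 ∣ N) (ha : a.Coprime N) : ¬ 2 ∣ a := by
  intro hc
  have h21 : (2 : ℕ) ∣ 1 := ha ▸ Nat.dvd_gcd hc h2N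
  omega

lemma lift_two {a N N₁ : ℕ} (hN : N = 2 * N₁) (hodd : ¬ 2 ∣ N₁)
    (h2a : ¬ 2 ∣ a) (h1 : a ≡ 1 [MOD N₁]) : a ≡ 1 [MOD N] := by
  have h2 : a ≡ 1 [MOD 2] := by show a % 2 = 1 % 2; omega
  have hcop2 : Nat.Coprime 2 N₁ := (Nat.prime_two.coprime_iff_not_dvd).mpr hodd
  have h3 := (Nat.modEq_and_modEq_iff_modEq_mul hcop2).mp ⟨h2, h1⟩
  rwa [← hN] at h3

lemma caseB {m n : ℕ} (hm : 2 ≤ m) (hn : 0 < n)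
    (hB : ∀ a : ℕ, a.Coprime (Nat.lcm m n) → a ≡ 1 [MOD n] → a ≡ 1 [MOD m]) :
    Nat.totient (Nat.lcm m n) = Nat.totient n := by
  set l := Nat.lcm m n with hldef
  have hml : m ∣ l := Nat.dvd_lcm_left m n
  have hnl : n ∣ l := Nat.dvd_lcm_right m n
  have hl : 0 < l := Nat.lcm_pos (by omega) hn
  haveI : NeZero l := ⟨hl.ne'⟩
  haveI : NeZero n := ⟨hn.ne'⟩
  have hsurj := ZMod.unitsMap_surjective hnl
  have hinj : Function.Injective (ZMod.unitsMap hnl) := by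
    rw [injective_iff_map_eq_one]
    intro u hu
    set x := ((u : ZMod l)).val with hx
    have hxl : x.Coprime l := ZMod.val_coe_unit_coprime u
    have hx1 : (x : ZMod n) = (1 : ℕ) := by
      rw [Nat.cast_one]
      have : ((ZMod.unitsMap hnl u : (ZMod n)ˣ) : ZMod n) = 1 := by rw [hu]; rfl
      rw [ZMod.unitsMap] at this
      simp only [Units.coe_map, MonoidHom.coe_coe] at this
      rwa [hx, ZMod.natCast_val, ← ZMod.castHom_apply (h := hnl)]
    have hxn : x ≡ 1 [MOD n] := (ZMod.natCast_eq_natCast_iff _ _ _).mp hx1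
    have hxm : x ≡ 1 [MOD m] := hB x hxl hxn
    have hxpos : 1 ≤ x := by
      rcases Nat.eq_zero_or_pos x with h0 | h0
      · exfalso
        rw [h0] at hxl
        have : l = 1 := by simpa [Nat.Coprime] using hxl
        have := Nat.le_of_dvd hl hml
        have := Nat.le_of_dvd hl hnl
        omega
      · exact h0
    have hdvd : l ∣ x - 1 := by
      apply Nat.lcm_dvd
      · exact (Nat.modEq_iff_dvd' hxpos).mp hxm.symm
      · exact (Nat.modEq_iff_dvd' hxpos).mp hxn.symm
    have hxl1 : x ≡ 1 [MOD l] := ((Nat.modEq_iff_dvd' hxpos).mpr hdvd).symm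
    have : (x : ZMod l) = (1 : ℕ) := (ZMod.natCast_eq_natCast_iff _ _ _).mpr hxl1
    apply Units.ext
    rw [show ((1 : (ZMod l)ˣ) : ZMod l) = 1 from rfl]
    rw [← ZMod.cast_id l (u : ZMod l), ← ZMod.natCast_val, ← hx, this, Nat.cast_one]
  have hcard := Fintype.card_of_bijective ⟨hinj, hsurj⟩
  rwa [ZMod.card_units_eq_totient, ZMod.card_units_eq_totient] at hcard



lemma endgame {m n : ℕ} (hm : 0 < m) (hn : 0 < n) (hlt : n < m)
    (hm' : m ∉ ({1, 2, 3, 4, 6} : Set ℕ)) (hn' : n ∉ ({1, 2, 3, 4, 6} : Set ℕ))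
    (star1 : ∀ a : ℕ, a.Coprime (Nat.lcm m n) → (a ≡ 1 [MOD n] ∨ a ≡ n - 1 [MOD n]) →
      (a ≡ 1 [MOD m] ∨ a ≡ m - 1 [MOD m]))
    (star2 : ∀ a : ℕ, a.Coprime (Nat.lcm m n) → (a ≡ 1 [MOD m] ∨ a ≡ m - 1 [MOD m]) →
      (a ≡ 1 [MOD n] ∨ a ≡ n - 1 [MOD n])) :
    Odd n ∧ m = 2 * n := by
  have hm5 : 5 ≤ m ∧ m ≠ 6 := by
    simp only [Set.mem_insert_iff, Set.mem_singleton_iff, not_or] at hm'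
    omega
  have hn5 : 5 ≤ n ∧ n ≠ 6 := by
    simp only [Set.mem_insert_iff, Set.mem_singleton_iff, not_or] at hn'
    omega
  set l := Nat.lcm m n with hldef
  have hml : m ∣ l := Nat.dvd_lcm_left m n
  have hnl : n ∣ l := Nat.dvd_lcm_right m n
  have hl : 0 < l := Nat.lcm_pos hm hn
  by_cases hB : ∀ a : ℕ, a.Coprime l → a ≡ 1 [MOD n] → a ≡ 1 [MOD m]
  · have hcard := caseB (by omega) hn hB
    rcases totient_eq_of_dvd hn hl hnl hcard with hle | ⟨h2n, hodd⟩
    · exfalso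
      have := Nat.le_of_dvd hl hml
      omega
    · have hm2n : m ∣ 2 * n := h2n ▸ hml
      obtain ⟨k, hk⟩ := hm2n
      rcases k with _ | _ | k
      · omega
      · exact ⟨hodd, by omega⟩
      · exfalso; nlinarith
  · push_neg at hB
    exfalso
    obtain ⟨a₀, ha₀l, ha₀n, ha₀m1⟩ := hB
    have ha₀m : a₀ ≡ m - 1 [MOD m] := (star1 a₀ ha₀l (Or.inl ha₀n)).resolve_left ha₀m1
    set g := Nat.gcd m n with hgdef
    have hgm : g ∣ m := Nat.gcd_dvd_left m n
    have hgn : g ∣ n := Nat.gcd_dvd_right m n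
    have hcong : (1 : ℕ) ≡ m - 1 [MOD g] :=
      (ha₀n.of_dvd hgn).symm.trans (ha₀m.of_dvd hgm)
    have hg2 : g ∣ 2 := by
      have hd1 : g ∣ m - 1 - 1 := (Nat.modEq_iff_dvd' (by omega : 1 ≤ m - 1)).mp hcong
      have hd2 : g ∣ m - (m - 2) :=
        Nat.dvd_sub hgm (by simpa [show m - 1 - 1 = m - 2 by omega] using hd1)
      simpa [show m - (m - 2) = 2 by omega] using hd2
    have hlmn : l ∣ m * n := Nat.lcm_dvd (dvd_mul_right m n) (dvd_mul_left n m)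
    have hgpos : 0 < g := Nat.gcd_pos_of_pos_left n hm
    have hgle := Nat.le_of_dvd (by norm_num) hg2
    interval_cases hgv : g
    · -- g = 1 : m, n coprime
      exact mix_contra hm hm' star1 n hgv hlmn (fun a _ h => h)
    · -- g = 2
      have h2m : 2 ∣ m := hgv ▸ hgm
      have h2n : 2 ∣ n := hgv ▸ hgn
      obtain ⟨m₁, hm₁⟩ := h2m
      obtain ⟨n₁, hn₁⟩ := h2n
      have hnotboth : ¬ (2 ∣ m₁ ∧ 2 ∣ n₁) := by
        rintro ⟨⟨s, hs⟩, ⟨t, ht⟩⟩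
        have h4m : 4 ∣ m := ⟨s, by omega⟩
        have h4n : 4 ∣ n := ⟨t, by omega⟩
        have h4g : (4 : ℕ) ∣ g := Nat.dvd_gcd h4m h4n
        rw [hgv] at h4g
        omega
      rcases Nat.even_or_odd n₁ with he | ho
      · -- n₁ even, so m₁ odd; swap roles, use star2
        have hm₁odd : ¬ 2 ∣ m₁ := fun hc => hnotboth ⟨hc, he.two_dvd⟩
        have hm₁m : m₁ ∣ m := ⟨2, by omega⟩
        have hcop : Nat.Coprime n m₁ := by
          have hd : Nat.gcd n m₁ ∣ 2 := by
            have h' := Nat.gcd_dvd_gcd_of_dvd_right n hm₁m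
            rwa [Nat.gcd_comm n m, ← hgdef] at h'
          have hne2 : ¬ 2 ∣ Nat.gcd n m₁ :=
            fun hc => hm₁odd (hc.trans (Nat.gcd_dvd_right n m₁))
          have hle2 := Nat.le_of_dvd (by norm_num) hd
          have hpos : 0 < Nat.gcd n m₁ := Nat.gcd_pos_of_pos_left m₁ hn
          show Nat.gcd n m₁ = 1
          omega
        have hdvd : l ∣ n * m₁ :=
          Nat.lcm_dvd ⟨n₁, by rw [hm₁, hn₁]; ring⟩ (dvd_mul_right n m₁)
        refine mix_contra hn hn' star2 m₁ hcop hdvd ?_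
        intro a ha h1
        exact lift_two hm₁ hm₁odd (odd_of_coprime_even hgn ha) h1
      · -- n₁ odd
        have hn₁odd : ¬ 2 ∣ n₁ := by rcases ho with ⟨t, ht⟩; omega
        have hn₁n : n₁ ∣ n := ⟨2, by omega⟩
        have hcop : Nat.Coprime m n₁ := by
          have hd : Nat.gcd m n₁ ∣ 2 := by
            have h' := Nat.gcd_dvd_gcd_of_dvd_right m hn₁n
            rwa [← hgdef] at h'
          have hne2 : ¬ 2 ∣ Nat.gcd m n₁ :=
            fun hc => hn₁odd (hc.trans (Nat.gcd_dvd_right m n₁))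
          have hle2 := Nat.le_of_dvd (by norm_num) hd
          have hpos : 0 < Nat.gcd m n₁ := Nat.gcd_pos_of_pos_left n₁ hm
          show Nat.gcd m n₁ = 1
          omega
        have hdvd : l ∣ m * n₁ :=
          Nat.lcm_dvd (dvd_mul_right m n₁) ⟨m₁, by rw [hm₁, hn₁]; ring⟩
        refine mix_contra hm hm' star1 n₁ hcop hdvd ?_
        intro a ha h1
        exact lift_two hn₁ hn₁odd (odd_of_coprime_even hgm ha) h1


/-- If `m, n` are positive integers with `n < m`, neither belonging to `{1,2,3,4,6}`,
and `ℚ(ζ_m + ζ_m⁻¹) = ℚ(ζ_n + ζ_n⁻¹)` as subfields of `ℂ`, then `n` is odd and `m = 2n`.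
(The maximal real subfield of a cyclotomic field determines the conductor up to a factor of 2.) -/
theorem maximal_real_subfield_determines_Q_up_to_two
    (m n : ℕ) (hm : 0 < m) (hn : 0 < n) (hlt : n < m)
    (hm' : m ∉ ({1, 2, 3, 4, 6} : Set ℕ)) (hn' : n ∉ ({1, 2, 3, 4, 6} : Set ℕ))
    (ζm : ℂ) (hζm : ζm = Complex.exp (2 * Real.pi * Complex.I / m))
    (ζn : ℂ) (hζn : ζn = Complex.exp (2 * Real.pi * Complex.I / n))
    (h : ℚ⟮ζm + ζm⁻¹⟯ = ℚ⟮ζn + ζn⁻¹⟯) :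
    Odd n ∧ m = 2 * n := by
  set l := Nat.lcm m n with hldef
  have hml : m ∣ l := Nat.dvd_lcm_left m n
  have hnl : n ∣ l := Nat.dvd_lcm_right m n
  have hl : 0 < l := Nat.lcm_pos hm hn
  set ζl : ℂ := Complex.exp (2 * Real.pi * Complex.I / l) with hζl
  have hζ : IsPrimitiveRoot ζl l := Complex.isPrimitiveRoot_exp l hl.ne'
  have hexp : ∀ k : ℕ, 0 < k → k ∣ l →
      ζl ^ (l / k) = Complex.exp (2 * Real.pi * Complex.I / k) := by
    intro k hk hkl
    rw [hζl, ← Complex.exp_nat_mul]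
    congr 1
    have h1 : ((l / k : ℕ) : ℂ) = (l : ℂ) / (k : ℂ) := by
      rw [Nat.cast_div_charZero hkl]
    rw [h1]
    have hk0 : (k : ℂ) ≠ 0 := Nat.cast_ne_zero.mpr hk.ne'
    have hl0 : (l : ℂ) ≠ 0 := Nat.cast_ne_zero.mpr hl.ne'
    field_simp
  have hem : ζl ^ (l / m) = ζm := by rw [hζm]; exact hexp m hm hml
  have hen : ζl ^ (l / n) = ζn := by rw [hζn]; exact hexp n hn hnl
  have hmem1 : ζl ^ (l / m) + (ζl ^ (l / m))⁻¹
      ∈ ℚ⟮ζl ^ (l / n) + (ζl ^ (l / n))⁻¹⟯ := by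
    rw [hem, hen]
    have hx := IntermediateField.mem_adjoin_simple_self ℚ (ζm + ζm⁻¹)
    rwa [h] at hx
  have hmem2 : ζl ^ (l / n) + (ζl ^ (l / n))⁻¹
      ∈ ℚ⟮ζl ^ (l / m) + (ζl ^ (l / m))⁻¹⟯ := by
    rw [hem, hen]
    have hx := IntermediateField.mem_adjoin_simple_self ℚ (ζn + ζn⁻¹)
    rwa [← h] at hx
  have star1 : ∀ a : ℕ, a.Coprime l → (a ≡ 1 [MOD n] ∨ a ≡ n - 1 [MOD n]) →
      (a ≡ 1 [MOD m] ∨ a ≡ m - 1 [MOD m]) :=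
    fun a ha han => star_lemma hl hm hn hml hnl hζ hmem1 a ha han
  have star2 : ∀ a : ℕ, a.Coprime l → (a ≡ 1 [MOD m] ∨ a ≡ m - 1 [MOD m]) →
      (a ≡ 1 [MOD n] ∨ a ≡ n - 1 [MOD n]) :=
    fun a ha ham => star_lemma hl hn hm hnl hml hζ hmem2 a ha ham
  exact endgame hm hn hlt hm' hn' star1 star2
end

section
/- Let m be a natural number with m ≥ 5 and m ≠ 6, and let p be an odd prime dividing m. Let K = ℚ(ζ_m + ζ_m⁻¹), viewed as a subfield of ℂ (a number field). Then p ramifies in K; that is, there exists a nonzero prime ideal P of the ring of integers 𝓞_K of K lying over p whose ramification index over p is at least 2. -/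
open IntermediateField

set_option maxHeartbeats 1000000

open IntermediateField NumberField

private lemma ratio_int {q : ℕ} (hq : 2 ≤ q) {ν μ : ℂ} (hν : IsPrimitiveRoot ν q)
    (hμ : μ ^ q = 1) : (1 - μ) / (1 - ν) ∈ integralClosure ℤ ℂ := by
  haveI : NeZero q := ⟨by omega⟩
  obtain ⟨i, -, hi⟩ := hν.eq_pow_of_pow_eq_one hμ
  have hν1 : (1 : ℂ) - ν ≠ 0 := sub_ne_zero.2 fun h => hν.ne_one hq h.symm
  have hint : ν ∈ integralClosure ℤ ℂ := hν.isIntegral (by omega)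
  have key : 1 - μ = (1 - ν) * ∑ t ∈ Finset.range i, ν ^ t := by
    have h := geom_sum_mul ν i
    rw [← hi]; linear_combination h
  rw [key, mul_div_cancel_left₀ _ hν1]
  exact Subalgebra.sum_mem _ fun t _ => Subalgebra.pow_mem _ hint t

private lemma prod_one_sub_primitiveRoots {q : ℕ} (hq : 1 ≤ q) {ξ : ℂ}
    (hξ : IsPrimitiveRoot ξ q) :
    (Polynomial.cyclotomic q ℤ).eval 1 = ∏ μ ∈ primitiveRoots q ℂ, (1 - μ) := by
  have h1 : (Polynomial.cyclotomic q ℂ).eval 1 = ∏ μ ∈ primitiveRoots q ℂ, (1 - μ) := by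
    rw [Polynomial.cyclotomic_eq_prod_X_sub_primitiveRoots hξ, Polynomial.eval_prod]
    simp
  rw [← h1, ← Polynomial.map_cyclotomic_int q ℂ, Polynomial.eval_map, Polynomial.eval₂_at_one]
  simp

private lemma inv_one_sub_int {d : ℕ} (hd : 2 ≤ d) (hnpp : ∀ P k : ℕ, P.Prime → P ^ k ≠ d)
    {η : ℂ} (hη : IsPrimitiveRoot η d) : (1 - η)⁻¹ ∈ integralClosure ℤ ℂ := by
  have h1 : ((1 : ℤ) : ℂ) = ∏ μ ∈ primitiveRoots d ℂ, (1 - μ) := by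
    rw [← prod_one_sub_primitiveRoots (by omega) hη,
      Polynomial.eval_one_cyclotomic_not_prime_pow (fun {P} hP k => hnpp P k hP)]
  have hmem : η ∈ primitiveRoots d ℂ := (mem_primitiveRoots (by omega)).2 hη
  have h2 : (1 - η) * ∏ μ ∈ (primitiveRoots d ℂ).erase η, (1 - μ) = 1 := by
    rw [Finset.mul_prod_erase _ _ hmem, ← h1]; norm_num
  have h3 : (1 - η)⁻¹ = ∏ μ ∈ (primitiveRoots d ℂ).erase η, (1 - μ) :=
    eq_inv_of_mul_eq_one_left (by rw [mul_comm] at h2; exact h2) |>.symm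
  rw [h3]
  exact Subalgebra.prod_mem _ fun μ hμ => by
    have : μ ∈ primitiveRoots d ℂ := Finset.mem_of_mem_erase hμ
    exact Subalgebra.sub_mem _ (Subalgebra.one_mem _)
      (((mem_primitiveRoots (show 0 < d by omega)).1 this).isIntegral (by omega))

private lemma caseA {p e d : ℕ} (hp : p.Prime) (htot : (p ^ (e + 1)).totient = 2 * d)
    {ξ : ℂ} (hξ : IsPrimitiveRoot ξ (p ^ (e + 1))) :
    ((1 - ξ) * (1 - ξ⁻¹)) ^ d / p ∈ integralClosure ℤ ℂ ∧
      (p : ℂ) / ((1 - ξ) * (1 - ξ⁻¹)) ^ d ∈ integralClosure ℤ ℂ := by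
  set q := p ^ (e + 1) with hqdef
  have hq2 : 2 ≤ q := by
    calc 2 ≤ p := hp.two_le
    _ ≤ p ^ (e + 1) := Nat.le_self_pow (by omega) p
  have hq0 : 0 < q := by omega
  have hξ1 : (1 : ℂ) - ξ ≠ 0 := sub_ne_zero.2 fun h => hξ.ne_one hq2 h.symm
  have hp0 : (p : ℂ) ≠ 0 := Nat.cast_ne_zero.2 hp.pos.ne'
  have hcard : (primitiveRoots q ℂ).card = 2 * d := by
    rw [hξ.card_primitiveRoots, htot]
  have hP : (p : ℂ) = ∏ μ ∈ primitiveRoots q ℂ, (1 - μ) := by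
    haveI : Fact p.Prime := ⟨hp⟩
    have h1 : (Polynomial.cyclotomic q ℤ).eval 1 = (p : ℤ) := by
      rw [hqdef]; exact_mod_cast Polynomial.eval_one_cyclotomic_prime_pow (R := ℤ) (p := p) e
    have h2 := prod_one_sub_primitiveRoots (q := q) (by omega) hξ
    rw [h1] at h2
    exact_mod_cast h2
  have hinvpow : (ξ⁻¹ : ℂ) ^ q = 1 := by rw [inv_pow, hξ.pow_eq_one, inv_one]
  have hratio1 : (1 - ξ⁻¹) / (1 - ξ) ∈ integralClosure ℤ ℂ := ratio_int hq2 hξ hinvpow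
  have hratio2 : (1 - ξ) / (1 - ξ⁻¹) ∈ integralClosure ℤ ℂ :=
    ratio_int hq2 (hξ.inv) hξ.pow_eq_one
  have h3 : (p : ℂ) / (1 - ξ) ^ (2 * d) = ∏ μ ∈ primitiveRoots q ℂ, ((1 - μ) / (1 - ξ)) := by
    rw [Finset.prod_div_distrib, ← hP, Finset.prod_const, hcard]
  have h4 : (1 - ξ) ^ (2 * d) / (p : ℂ) = ∏ μ ∈ primitiveRoots q ℂ, ((1 - ξ) / (1 - μ)) := by
    rw [Finset.prod_div_distrib, ← hP, Finset.prod_const, hcard]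
  have hmu1 : ∀ μ ∈ primitiveRoots q ℂ, (1 : ℂ) - μ ≠ 0 := fun μ hμ =>
    sub_ne_zero.2 fun h => ((mem_primitiveRoots hq0).1 hμ).ne_one hq2 h.symm
  constructor
  · have heq : ((1 - ξ) * (1 - ξ⁻¹)) ^ d / p
        = (1 - ξ) ^ (2 * d) / (p : ℂ) * ((1 - ξ⁻¹) / (1 - ξ)) ^ d := by
      rw [mul_pow, two_mul, pow_add, div_pow]
      field_simp
    rw [heq, h4]
    exact Subalgebra.mul_mem _
      (Subalgebra.prod_mem _ fun μ hμ =>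
        ratio_int hq2 ((mem_primitiveRoots hq0).1 hμ) hξ.pow_eq_one)
      (Subalgebra.pow_mem _ hratio1 d)
  · have heq : (p : ℂ) / ((1 - ξ) * (1 - ξ⁻¹)) ^ d
        = (p : ℂ) / (1 - ξ) ^ (2 * d) * ((1 - ξ) / (1 - ξ⁻¹)) ^ d := by
      have hAB : (1 - ξ) * (1 - ξ⁻¹) = (1 - ξ) ^ 2 * ((1 - ξ⁻¹) / (1 - ξ)) := by
        field_simp
      rw [hAB, mul_pow, ← pow_mul, div_mul_eq_div_div, div_eq_mul_inv ((p : ℂ) / _),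
        ← inv_pow, inv_div]
    rw [heq, h3]
    exact Subalgebra.mul_mem _
      (Subalgebra.prod_mem _ fun μ hμ =>
        ratio_int hq2 hξ ((mem_primitiveRoots hq0).1 hμ).pow_eq_one)
      (Subalgebra.pow_mem _ hratio2 d)

private lemma conj_fixed_of_mem {α : ℂ} (hα : (starRingEnd ℂ) α = α) {x : ℂ}
    (hx : x ∈ (ℚ⟮α⟯ : IntermediateField ℚ ℂ)) : (starRingEnd ℂ) x = x := by
  let F : IntermediateField ℚ ℂ :=
    Subfield.toIntermediateField ((starRingEnd ℂ).eqLocusField (RingHom.id ℂ))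
      (fun q => show (starRingEnd ℂ) ((algebraMap ℚ ℂ) q) = RingHom.id ℂ ((algebraMap ℚ ℂ) q) by
        simp)
  have hle : (ℚ⟮α⟯ : IntermediateField ℚ ℂ) ≤ F :=
    adjoin_simple_le_iff.2 (by exact hα)
  exact hle hx

private lemma real_mem_adjoin_cos {ζ : ℂ} (hζ0 : ζ ≠ 0) (hζalg : IsAlgebraic ℚ ζ)
    (hζne : ζ ≠ ζ⁻¹) (hconj : (starRingEnd ℂ) ζ = ζ⁻¹)
    {y : ℂ} (hyL : y ∈ (ℚ⟮ζ⟯ : IntermediateField ℚ ℂ)) (hyR : (starRingEnd ℂ) y = y) :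
    y ∈ (ℚ⟮ζ + ζ⁻¹⟯ : IntermediateField ℚ ℂ) := by
  set K : IntermediateField ℚ ℂ := ℚ⟮ζ + ζ⁻¹⟯ with hKdef
  have hαconj : (starRingEnd ℂ) (ζ + ζ⁻¹) = ζ + ζ⁻¹ := by
    rw [map_add, hconj, map_inv₀, hconj, inv_inv, add_comm]
  have hfix : ∀ x ∈ K, (starRingEnd ℂ) x = x := fun x hx => conj_fixed_of_mem hαconj hx
  -- ζ is integral over K
  have hζint : IsIntegral (↥K) ζ :=
    isAlgebraic_iff_isIntegral.1 (hζalg.tower_top (↥K))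
  -- y is in the ℚ-span... y ∈ adjoin K {ζ} as an algebra
  have hyT : y ∈ Algebra.adjoin (↥K) {ζ} := by
    have h1 : (ℚ⟮ζ⟯ : IntermediateField ℚ ℂ)
        ≤ (IntermediateField.adjoin (↥K) {ζ}).restrictScalars ℚ := by
      apply adjoin_simple_le_iff.2
      rw [IntermediateField.mem_restrictScalars]
      exact IntermediateField.subset_adjoin _ _ rfl
    have h2 : y ∈ IntermediateField.adjoin (↥K) {ζ} := h1 hyL
    rwa [← IntermediateField.adjoin_simple_toSubalgebra_of_isAlgebraic hζint.isAlgebraic] at *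
  -- every element of the ring adjoin is a + b ζ with a b ∈ K
  have hrep : ∃ a b : ℂ, a ∈ K ∧ b ∈ K ∧ y = a + b * ζ := by
    refine Algebra.adjoin_induction (fun x hx => ?_) (fun r => ?_) (fun s t _ _ hs ht => ?_)
      (fun s t _ _ hs ht => ?_) hyT
    · rw [Set.mem_singleton_iff] at hx
      exact ⟨0, 1, zero_mem _, one_mem _, by rw [hx]; ring⟩
    · exact ⟨(r : ℂ), 0, r.2, zero_mem _, by simp [IntermediateField.algebraMap_apply]⟩
    · obtain ⟨a1, b1, ha1, hb1, he1⟩ := hs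
      obtain ⟨a2, b2, ha2, hb2, he2⟩ := ht
      exact ⟨a1 + a2, b1 + b2, add_mem ha1 ha2, add_mem hb1 hb2, by rw [he1, he2]; ring⟩
    · obtain ⟨a1, b1, ha1, hb1, he1⟩ := hs
      obtain ⟨a2, b2, ha2, hb2, he2⟩ := ht
      refine ⟨a1 * a2 - b1 * b2, a1 * b2 + b1 * a2 + b1 * b2 * (ζ + ζ⁻¹),
        sub_mem (mul_mem ha1 ha2) (mul_mem hb1 hb2),
        add_mem (add_mem (mul_mem ha1 hb2) (mul_mem hb1 ha2))
          (mul_mem (mul_mem hb1 hb2) (IntermediateField.mem_adjoin_simple_self ℚ _)), ?_⟩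
      have hinv : ζ⁻¹ * ζ = 1 := inv_mul_cancel₀ hζ0
      rw [he1, he2]
      linear_combination (-(b1 * b2)) * hinv
  obtain ⟨a, b, haK, hbK, hab⟩ := hrep
  have hconjy : a + b * ζ⁻¹ = a + b * ζ := by
    have := hyR
    rw [hab] at this
    rw [map_add, map_mul, hfix a haK, hfix b hbK, hconj] at this
    exact this
  have hb0 : b = 0 := by
    by_contra hb
    have h' : b * ζ⁻¹ = b * ζ := add_left_cancel hconjy
    exact hζne (mul_left_cancel₀ hb h').symm
  rw [hab, hb0, zero_mul, add_zero]
  exact haK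

private lemma final (K : IntermediateField ℚ ℂ) (hfd : FiniteDimensional ℚ (↥K))
    (p : ℕ) (hp : p.Prime) (x u : ℂ) (n : ℕ) (hn : 2 ≤ n)
    (hxK : x ∈ K) (huK : u ∈ K) (huiK : u⁻¹ ∈ K)
    (hxI : x ∈ integralClosure ℤ ℂ) (huI : u ∈ integralClosure ℤ ℂ)
    (huiI : u⁻¹ ∈ integralClosure ℤ ℂ)
    (hx0 : x ≠ 0) (hu0 : u ≠ 0) (hxn : x ^ n = p * u) :
    ∃ P : Ideal (NumberField.RingOfIntegers K),
      P ≠ ⊥ ∧ P.IsPrime ∧ (p : NumberField.RingOfIntegers K) ∈ P ∧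
      2 ≤ Ideal.ramificationIdx'
            (Ideal.span {(p : ℤ)}) P := by
  obtain ⟨n', rfl⟩ : ∃ n', n = 2 + n' := ⟨n - 2, by omega⟩
  haveI : NumberField (↥K) := ⟨⟩
  have hinj : Function.Injective (algebraMap (↥K) ℂ) := (algebraMap (↥K) ℂ).injective
  have hXi : IsIntegral ℤ (⟨x, hxK⟩ : ↥K) := (isIntegral_algebraMap_iff hinj).1 hxI
  have hUi : IsIntegral ℤ (⟨u, huK⟩ : ↥K) := (isIntegral_algebraMap_iff hinj).1 huI
  have hVi : IsIntegral ℤ (⟨u⁻¹, huiK⟩ : ↥K) := (isIntegral_algebraMap_iff hinj).1 huiI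
  set X : 𝓞 (↥K) := ⟨⟨x, hxK⟩, hXi⟩ with hXdef
  set U : 𝓞 (↥K) := ⟨⟨u, huK⟩, hUi⟩ with hUdef
  set V : 𝓞 (↥K) := ⟨⟨u⁻¹, huiK⟩, hVi⟩ with hVdef
  let φ : 𝓞 (↥K) →+* ℂ := (algebraMap (↥K) ℂ).comp (algebraMap (𝓞 (↥K)) (↥K))
  have hφinj : Function.Injective φ :=
    hinj.comp (NumberField.RingOfIntegers.coe_injective)
  have hφX : φ X = x := rfl
  have hφU : φ U = u := rfl
  have hφV : φ V = u⁻¹ := rfl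
  have hφp : φ ((p : 𝓞 (↥K))) = (p : ℂ) := map_natCast φ p
  have hUV : U * V = 1 := by
    apply hφinj
    rw [map_mul, map_one, hφU, hφV]
    exact mul_inv_cancel₀ hu0
  have hVunit : IsUnit V := IsUnit.of_mul_eq_one (a := V) U (by rw [mul_comm]; exact hUV)
  have hpXV : (p : 𝓞 (↥K)) = X * (X * (X ^ n' * V)) := by
    apply hφinj
    rw [map_mul, map_mul, map_mul, map_pow, hφX, hφV, hφp]
    have hxx : x * (x * (x ^ n' * u⁻¹)) = x ^ (2 + n') * u⁻¹ := by
      rw [pow_add, pow_two]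
      ring
    rw [hxx, hxn, mul_assoc, mul_inv_cancel₀ hu0, mul_one]
  have hpnotunit : ¬IsUnit ((p : 𝓞 (↥K))) := by
    intro hun
    obtain ⟨w, hw⟩ : ∃ w : 𝓞 (↥K), (p : 𝓞 (↥K)) * w = 1 := by
      obtain ⟨υ, hυ⟩ := hun
      exact ⟨↑υ⁻¹, by rw [← hυ]; exact υ.mul_inv⟩
    have hwC : (p : ℂ) * φ w = 1 := by
      have := congrArg φ hw
      rwa [map_mul, map_one, hφp] at this
    have hwint : IsIntegral ℤ (φ w) :=
      map_isIntegral_int (algebraMap (↥K) ℂ) (w.2 : IsIntegral ℤ ((w : ↥K)))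
    have hp0 : (p : ℂ) ≠ 0 := Nat.cast_ne_zero.2 hp.pos.ne'
    have hwq : φ w = algebraMap ℚ ℂ ((p : ℚ)⁻¹) := by
      have : φ w = (p : ℂ)⁻¹ := by
        field_simp
        linear_combination hwC
      rw [this]
      push_cast
      rfl
    rw [hwq] at hwint
    have : IsIntegral ℤ ((p : ℚ)⁻¹) :=
      (isIntegral_algebraMap_iff ((algebraMap ℚ ℂ).injective)).1 hwint
    obtain ⟨y, hy⟩ := IsIntegrallyClosed.isIntegral_iff.1 this
    have hy' : (y : ℚ) = (p : ℚ)⁻¹ := by exact_mod_cast hy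
    have hpy : (p : ℚ) * (y : ℚ) = 1 := by
      rw [hy']
      exact mul_inv_cancel₀ (by exact_mod_cast hp.pos.ne')
    have hzy : (p : ℤ) * y = 1 := by exact_mod_cast hpy
    have hp1 : (p : ℤ) = 1 := Int.eq_one_of_mul_eq_one_right (by positivity) hzy
    have hpone : p = 1 := by exact_mod_cast hp1
    exact hp.one_lt.ne' hpone
  have hXnotunit : ¬IsUnit X := by
    intro hX
    exact hpnotunit (hpXV ▸ (hX.mul (hX.mul ((hX.pow _).mul hVunit))))
  obtain ⟨M, hMmax, hXM⟩ := Ideal.exists_le_maximal (Ideal.span {X})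
    (fun h => hXnotunit (Ideal.span_singleton_eq_top.1 h))
  have hXmem : X ∈ M := hXM (Ideal.subset_span rfl)
  have hX0 : X ≠ 0 := fun h => hx0 (by rw [← hφX, h, map_zero])
  have hpM2 : (p : 𝓞 (↥K)) ∈ M ^ 2 := by
    rw [hpXV, pow_two, ← mul_assoc]
    exact Ideal.mul_mem_right _ _ (Ideal.mul_mem_mul hXmem hXmem)
  have hmap : Ideal.map (algebraMap ℤ (𝓞 (↥K))) (Ideal.span {(p : ℤ)})
      = Ideal.span {(p : 𝓞 (↥K))} := by
    rw [Ideal.map_span]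
    congr 1
    simp
  refine ⟨M, fun h => hX0 (Ideal.mem_bot.mp (by rw [← h]; exact hXmem)), hMmax.isPrime, ?_, ?_⟩
  · rw [hpXV]
    exact Ideal.mul_mem_right _ _ hXmem
  · have hSmem : 2 ∈ {k | Ideal.map (algebraMap ℤ (𝓞 (↥K))) (Ideal.span {(p : ℤ)}) ≤ M ^ k} := by
      rw [Set.mem_setOf_eq, hmap, Ideal.span_singleton_le_iff_mem]
      exact hpM2
    have hp0C : (p : ℂ) ≠ 0 := Nat.cast_ne_zero.2 hp.pos.ne'
    have hppos : (p : 𝓞 (↥K)) ≠ 0 := fun h => hp0C (by rw [← hφp, h, map_zero])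
    have hbdd : BddAbove {k | Ideal.map (algebraMap ℤ (𝓞 (↥K))) (Ideal.span {(p : ℤ)}) ≤ M ^ k} := by
      by_contra hnb
      have hall : ∀ nn : ℕ, Ideal.map (algebraMap ℤ (𝓞 (↥K))) (Ideal.span {(p : ℤ)}) ≤ M ^ nn := by
        intro nn
        rcases not_bddAbove_iff.1 hnb nn with ⟨k, hkS, hnk⟩
        exact le_trans hkS (Ideal.pow_le_pow_right hnk.le)
      have hbot : Ideal.map (algebraMap ℤ (𝓞 (↥K))) (Ideal.span {(p : ℤ)}) ≤ ⊥ := by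
        rw [← Ideal.iInf_pow_eq_bot_of_isDomain (I := M) hMmax.ne_top]
        exact le_iInf hall
      rw [hmap, le_bot_iff, Ideal.span_singleton_eq_bot] at hbot
      exact hppos hbot
    unfold Ideal.ramificationIdx'
    exact le_csSup hbdd hSmem

private lemma nppow3 {d e : ℕ} (h3 : 3 ∣ d) (he : e ∣ d) (he2 : 2 ≤ e)
    (hcop : ¬ 3 ∣ e) : ∀ P k : ℕ, P.Prime → P ^ k ≠ d := by
  intro P k hP heq
  subst heq
  have hP3 : P = 3 := ((Nat.prime_dvd_prime_iff_eq Nat.prime_three hP).1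
    (Nat.Prime.dvd_of_dvd_pow Nat.prime_three h3)).symm
  subst hP3
  have hcop3 : Nat.Coprime e 3 :=
    Nat.coprime_comm.mp ((Nat.Prime.coprime_iff_not_dvd Nat.prime_three).2 hcop)
  have he1 : e = 1 := (hcop3.pow_right k).eq_one_of_dvd he
  omega

/-- If `m ≥ 5`, `m ≠ 6`, and `p` is an odd prime dividing `m`, then `p` ramifies in
`K = ℚ(ζ_m + ζ_m⁻¹)`: there is a nonzero prime ideal of `𝓞_K` lying over `p` whose
ramification index over `p` is at least `2`. -/
theorem odd_prime_ramifies_in_maximal_real_subfield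
    (m : ℕ) (hm : 5 ≤ m) (hm6 : m ≠ 6)
    (p : ℕ) (hp : p.Prime) (hodd : Odd p) (hpm : p ∣ m)
    (ζ : ℂ) (hζ : ζ = Complex.exp (2 * Real.pi * Complex.I / m))
    (K : IntermediateField ℚ ℂ) (hK : K = ℚ⟮ζ + ζ⁻¹⟯) :
    ∃ P : Ideal (NumberField.RingOfIntegers K),
      P ≠ ⊥ ∧ P.IsPrime ∧ (p : NumberField.RingOfIntegers K) ∈ P ∧
      2 ≤ Ideal.ramificationIdx'
            (Ideal.span {(p : ℤ)}) P := by
  subst hK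
  have hm0 : m ≠ 0 := by omega
  have hprim : IsPrimitiveRoot ζ m := hζ ▸ Complex.isPrimitiveRoot_exp m hm0
  have hζ0 : ζ ≠ 0 := hprim.ne_zero hm0
  have hconjζ : (starRingEnd ℂ) ζ = ζ⁻¹ := by
    have hc : (starRingEnd ℂ) (2 * (Real.pi : ℂ) * Complex.I / m)
        = -(2 * (Real.pi : ℂ) * Complex.I / m) := by
      simp [map_div₀, map_mul, Complex.conj_I, Complex.conj_ofReal, map_ofNat]
      ring
    rw [hζ, ← Complex.exp_conj, hc, Complex.exp_neg]
  have hζI : ζ ∈ integralClosure ℤ ℂ := hprim.isIntegral (by omega)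
  have hζinvI : ζ⁻¹ ∈ integralClosure ℤ ℂ := by
    have h1 : ζ⁻¹ = ζ ^ (m - 1) := by
      apply inv_eq_of_mul_eq_one_right
      rw [← pow_succ']
      have : m - 1 + 1 = m := by omega
      rw [this]
      exact hprim.pow_eq_one
    rw [h1]
    exact pow_mem hζI _
  have hpinv : ∀ j : ℕ, (ζ ^ j)⁻¹ ∈ integralClosure ℤ ℂ := fun j => by
    rw [← inv_pow]; exact pow_mem hζinvI j
  have hζalg : IsAlgebraic ℚ ζ := ((hζI : IsIntegral ℤ ζ).tower_top (A := ℚ)).isAlgebraic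
  have hζne : ζ ≠ ζ⁻¹ := by
    intro h
    have h2 : ζ ^ 2 = 1 := by
      rw [pow_two]
      nth_rewrite 2 [h]
      exact mul_inv_cancel₀ hζ0
    have hd := Nat.le_of_dvd (by norm_num) (hprim.dvd_of_pow_eq_one 2 h2)
    omega
  have hαint : IsIntegral ℚ (ζ + ζ⁻¹) :=
    ((add_mem hζI hζinvI : (ζ + ζ⁻¹) ∈ integralClosure ℤ ℂ) : IsIntegral ℤ _).tower_top
  have hfd : FiniteDimensional ℚ ↥(ℚ⟮ζ + ζ⁻¹⟯ : IntermediateField ℚ ℂ) :=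
    IntermediateField.adjoin.finiteDimensional hαint
  have hmemK : ∀ z : ℂ, z ∈ (ℚ⟮ζ⟯ : IntermediateField ℚ ℂ) → (starRingEnd ℂ) z = z →
      z ∈ (ℚ⟮ζ + ζ⁻¹⟯ : IntermediateField ℚ ℂ) := fun z h1 h2 =>
    real_mem_adjoin_cos hζ0 hζalg hζne hconjζ h1 h2
  have hζL : ζ ∈ (ℚ⟮ζ⟯ : IntermediateField ℚ ℂ) := mem_adjoin_simple_self ℚ ζ
  have hp0 : (p : ℂ) ≠ 0 := Nat.cast_ne_zero.2 hp.pos.ne'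
  suffices h : ∃ x u : ℂ, ∃ n, 2 ≤ n ∧ x ∈ (ℚ⟮ζ⟯ : IntermediateField ℚ ℂ) ∧
      u ∈ (ℚ⟮ζ⟯ : IntermediateField ℚ ℂ) ∧ (starRingEnd ℂ) x = x ∧ (starRingEnd ℂ) u = u ∧
      x ∈ integralClosure ℤ ℂ ∧ u ∈ integralClosure ℤ ℂ ∧ u⁻¹ ∈ integralClosure ℤ ℂ ∧
      x ≠ 0 ∧ u ≠ 0 ∧ x ^ n = p * u by
    obtain ⟨x, u, n, hn, hxL, huL, hxR, huR, hxI, huI, huiI, hx0, hu0, hxn⟩ := h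
    exact final _ hfd p hp x u n hn (hmemK x hxL hxR) (hmemK u huL huR)
      (hmemK u⁻¹ (inv_mem huL) (by rw [map_inv₀, huR])) hxI huI huiI hx0 hu0 hxn
  by_cases h9 : p = 3 ∧ ¬ (9 ∣ m)
  · -- case B : p = 3 exactly divides m
    obtain ⟨hp3, h9m⟩ := h9
    have hm3 : 3 ∣ m := hp3 ▸ hpm
    obtain ⟨m', hm'⟩ := hm3
    have h3m' : ¬ 3 ∣ m' := fun ⟨c, hc⟩ => h9m ⟨c, by omega⟩
    have hm'4 : 4 ≤ m' := by omega
    -- the primitive cube root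
    set ω := ζ ^ m' with hωdef
    have hωprim : IsPrimitiveRoot ω 3 := hprim.pow (Nat.pos_of_ne_zero hm0) (show m = m' * 3 by omega)
    have hω3 : ω ^ 3 = 1 := hωprim.pow_eq_one
    have hω1 : ω ≠ 1 := hωprim.ne_one (by norm_num)
    have hsum : ω ^ 2 + ω + 1 = 0 := by
      rcases mul_eq_zero.1 (show (ω - 1) * (ω ^ 2 + ω + 1) = 0 by linear_combination hω3)
        with h | h
      · exact absurd (by linear_combination h) hω1
      · exact h
    have hω2 : (ω - ω⁻¹) ^ 2 = -3 := by
      have hωinv : ω⁻¹ = ω ^ 2 :=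
        inv_eq_of_mul_eq_one_right (by linear_combination hω3)
      rw [hωinv]
      linear_combination (ω - 2) * hω3 + hsum
    have hωsub0 : ω - ω⁻¹ ≠ 0 := by
      intro h
      have h1 : ω ^ 2 = 1 := by
        rw [pow_two]
        nth_rewrite 2 [show ω = ω⁻¹ from by linear_combination h]
        exact mul_inv_cancel₀ (hωprim.ne_zero (by norm_num))
      have := hωprim.dvd_of_pow_eq_one 2 h1
      omega
    -- choose exponent a and order d
    obtain ⟨a, d, hd2, hnpp, hη⟩ : ∃ a d : ℕ, 2 ≤ d ∧ (∀ P k : ℕ, P.Prime → P ^ k ≠ d) ∧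
        IsPrimitiveRoot ((ζ ^ a) ^ 2) d := by
      rcases Nat.even_or_odd m with hmev | hmodd
      · -- m even :  a = 1, d = m / 2
        have hm'2 : 2 ∣ m' := by
          rcases hmev with ⟨t, ht⟩
          omega
        obtain ⟨c, hc⟩ := hm'2
        refine ⟨1, 3 * c, by omega, nppow3 ⟨c, rfl⟩ ⟨3, by ring⟩ (by omega)
          (fun h => h3m' (by obtain ⟨t, ht⟩ := h; exact ⟨2 * t, by omega⟩)), ?_⟩
        have : (ζ ^ 1) ^ 2 = ζ ^ 2 := by ring
        rw [this]
        exact hprim.pow (by omega) (by omega)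
      · -- m odd : a = (m+1)/2, d = m
        refine ⟨(m + 1) / 2, m, by omega, nppow3 ⟨m', by omega⟩
          (show m' ∣ m from ⟨3, by omega⟩) (by omega) h3m', ?_⟩
        have h2a : (ζ ^ ((m + 1) / 2)) ^ 2 = ζ := by
          rw [← pow_mul]
          have hex : (m + 1) / 2 * 2 = m + 1 := by
            rcases hmodd with ⟨t, ht⟩
            omega
          rw [hex, pow_succ, hprim.pow_eq_one, one_mul]
        rw [h2a]
        exact hprim
    set τ := ζ ^ a with hτdef
    have hτ0 : τ ≠ 0 := pow_ne_zero a hζ0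
    have hτI : τ ∈ integralClosure ℤ ℂ := pow_mem hζI a
    have hτiI : τ⁻¹ ∈ integralClosure ℤ ℂ := hpinv a
    have hconjτ : (starRingEnd ℂ) τ = τ⁻¹ := by rw [hτdef, map_pow, hconjζ, inv_pow]
    have hη1 : τ ^ 2 ≠ 1 := hη.ne_one (by omega)
    set s := τ - τ⁻¹ with hsdef
    have hs0 : s ≠ 0 := by
      intro h
      apply hη1
      have hττ : τ = τ⁻¹ := by linear_combination h
      rw [pow_two]
      nth_rewrite 2 [hττ]
      exact mul_inv_cancel₀ hτ0
    have h1τ2 : (1 : ℂ) - τ ^ 2 ≠ 0 := fun h => hη1 (by linear_combination -h)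
    have hsinv : s⁻¹ = -τ * (1 - τ ^ 2)⁻¹ := by
      apply inv_eq_of_mul_eq_one_right
      rw [hsdef]
      field_simp
      ring
    have hsI : s ∈ integralClosure ℤ ℂ := sub_mem hτI hτiI
    have hsiI : s⁻¹ ∈ integralClosure ℤ ℂ := by
      rw [hsinv]
      exact mul_mem (neg_mem hτI) (inv_one_sub_int hd2 hnpp hη)
    have hωI : ω - ω⁻¹ ∈ integralClosure ℤ ℂ := sub_mem (pow_mem hζI m') (hpinv m')
    have hconjω : (starRingEnd ℂ) ω = ω⁻¹ := by rw [hωdef, map_pow, hconjζ, inv_pow]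
    refine ⟨(ω - ω⁻¹) * s, -(s ^ 2), 2, le_refl 2, ?_, ?_, ?_, ?_, ?_, ?_, ?_, ?_, ?_, ?_⟩
    · exact mul_mem (sub_mem (pow_mem hζL m') (inv_mem (pow_mem hζL m')))
        (sub_mem (pow_mem hζL a) (inv_mem (pow_mem hζL a)))
    · exact neg_mem (pow_mem (sub_mem (pow_mem hζL a) (inv_mem (pow_mem hζL a))) 2)
    · rw [map_mul, map_sub, map_sub, hconjω, hconjτ, map_inv₀, map_inv₀, hconjω, hconjτ,
        inv_inv, inv_inv]
      ring
    · rw [map_neg, map_pow, map_sub, hconjτ, map_inv₀, hconjτ, inv_inv]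
      ring
    · exact mul_mem hωI hsI
    · exact neg_mem (pow_mem hsI 2)
    · have hneg : (-(s ^ 2))⁻¹ = -((s⁻¹) ^ 2) := by rw [inv_neg, inv_pow]
      rw [hneg]
      exact neg_mem (pow_mem hsiI 2)
    · exact mul_ne_zero hωsub0 hs0
    · exact neg_ne_zero.2 (pow_ne_zero 2 hs0)
    · rw [hp3]
      push_cast
      rw [mul_pow, hω2]
      ring
  · push_neg at h9
    obtain ⟨e, d, hqm, hd2, htot⟩ : ∃ e d : ℕ, p ^ (e + 1) ∣ m ∧ 2 ≤ d ∧
        (p ^ (e + 1)).totient = 2 * d := by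
      rcases eq_or_ne p 3 with hp3 | hp3
      · have h9m := h9 hp3
        exact ⟨1, 3, by rw [hp3]; simpa using h9m, by norm_num, by rw [hp3]; decide⟩
      · have hodd' := Nat.odd_iff.1 hodd
        have h2le := hp.two_le
        have hp5 : 5 ≤ p := by
          rcases Nat.lt_or_ge p 5 with h | h
          · interval_cases p
            · omega
            · omega
            · exact absurd hp (by norm_num)
          · exact h
        refine ⟨0, (p - 1) / 2, by simpa using hpm, by omega, ?_⟩
        rw [pow_one, Nat.totient_prime hp]
        omega
    set q := p ^ (e + 1) with hqdef
    have hq2 : 2 ≤ q := le_trans hp.two_le (Nat.le_self_pow (by omega) p)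
    have hξprim : IsPrimitiveRoot (ζ ^ (m / q)) q :=
      hprim.pow (Nat.pos_of_ne_zero hm0) (Nat.div_mul_cancel hqm).symm
    set ξ := ζ ^ (m / q) with hξdef
    have hconjξ : (starRingEnd ℂ) ξ = ξ⁻¹ := by rw [hξdef, map_pow, hconjζ, inv_pow]
    have hξ1 : (1 : ℂ) - ξ ≠ 0 := sub_ne_zero.2 fun h => hξprim.ne_one hq2 h.symm
    have hξi1 : (1 : ℂ) - ξ⁻¹ ≠ 0 := sub_ne_zero.2 fun h => (hξprim.inv).ne_one hq2 h.symm
    set x := (1 - ξ) * (1 - ξ⁻¹) with hxdef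
    have hx0 : x ≠ 0 := mul_ne_zero hξ1 hξi1
    have hxL : x ∈ (ℚ⟮ζ⟯ : IntermediateField ℚ ℂ) :=
      mul_mem (sub_mem (one_mem _) (pow_mem hζL _))
        (sub_mem (one_mem _) (inv_mem (pow_mem hζL _)))
    have hxR : (starRingEnd ℂ) x = x := by
      rw [hxdef, map_mul, map_sub, map_sub, map_one, hconjξ, map_inv₀, hconjξ, inv_inv]
      ring
    have hcA := caseA hp htot hξprim
    refine ⟨x, x ^ d / p, d, by omega, hxL, ?_, hxR, ?_, ?_, ?_, ?_, hx0, ?_, ?_⟩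
    · exact div_mem (pow_mem hxL d) (_root_.natCast_mem _ p)
    · rw [map_div₀, map_pow, hxR, map_natCast]
    · exact mul_mem (sub_mem (one_mem _) (pow_mem hζI _)) (sub_mem (one_mem _) (hpinv _))
    · exact hcA.1
    · rw [inv_div]
      exact hcA.2
    · exact div_ne_zero (pow_ne_zero d hx0) hp0
    · field_simp
end

section
/- Let b₁, b₂, b₃ be positive integers with gcd(b₁,b₂,b₃) = 1, set Q = b₁ + b₂ + b₃, and suppose Q is even. If 4·(Σ_{i : b_i ∣ Q} b_i) ≥ 3Q, i.e. the sum of those b_i (counted with multiplicity) which divide Q is at least 3Q/4, then the multiset {b₁, b₂, b₃} equals {1,1,2}, {1,2,3}, or {3,4,5}. -/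
/-- If `a` properly divides `n`, then `2*a ≤ n`. -/
lemma aux_two_mul_le_of_dvd {a n : ℕ} (h : a ∣ n) (h2 : a < n) : 2 * a ≤ n := by
  obtain ⟨c, rfl⟩ := h
  match c with
  | 0 => omega
  | 1 => omega
  | (c+2) =>
    calc 2 * a = a * 2 := by ring
    _ ≤ a * (c + 2) := Nat.mul_le_mul_left _ (by omega)

/-- Exactly-one-divides case is impossible. -/
lemma aux_no_one (Q a b c : ℕ) (hb : 0 < b) (hc : 0 < c)
    (hQ : a + b + c = Q) (da : a ∣ Q) (hsum : 4 * a ≥ 3 * Q) : False := by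
  have h2a : 2 * a ≤ Q := aux_two_mul_le_of_dvd da (by omega)
  omega

/-- Exactly-two-divide case is impossible. -/
lemma aux_no_two (Q a b c : ℕ) (ha : 0 < a) (hb : 0 < b) (hc : 0 < c)
    (hQ : a + b + c = Q) (da : a ∣ Q) (db : b ∣ Q) (dc : ¬ c ∣ Q)
    (hsum : 4 * (a + b) ≥ 3 * Q) : False := by
  have haQ : a < Q := by omega
  have hbQ : b < Q := by omega
  have h2b : 2 * b ≤ Q := aux_two_mul_le_of_dvd db hbQ
  have h2a : 2 * a ≤ Q := aux_two_mul_le_of_dvd da haQ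
  obtain ⟨m, hm⟩ := da
  obtain ⟨n, hn⟩ := db
  have hm2 : 2 ≤ m := by
    rcases m with _ | _ | m
    · omega
    · omega
    · omega
  have hn2 : 2 ≤ n := by
    rcases n with _ | _ | n
    · omega
    · omega
    · omega
  have h4a : Q ≤ 4 * a := by omega
  have h4b : Q ≤ 4 * b := by omega
  have hm4 : m ≤ 4 := by
    have : a * m ≤ a * 4 := by rw [← hm]; omega
    exact Nat.le_of_mul_le_mul_left this ha
  have hn4 : n ≤ 4 := by
    have : b * n ≤ b * 4 := by rw [← hn]; omega
    exact Nat.le_of_mul_le_mul_left this hb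
  interval_cases m <;> interval_cases n <;>
    first
      | omega
      | exact dc ⟨2, by omega⟩
      | exact dc ⟨3, by omega⟩
      | exact dc ⟨4, by omega⟩
      | exact dc ⟨6, by omega⟩

/-- The ordered all-divide case. -/
lemma aux_ordered (Q a b c : ℕ) (ha : 0 < a) (hab : a ≤ b) (hbc : b ≤ c)
    (hQ : a + b + c = Q) (heven : 2 ∣ Q)
    (db : b ∣ Q) (dc : c ∣ Q)
    (H : ∀ d, d ∣ a → d ∣ b → d ∣ c → d = 1) :
    (a = 1 ∧ b = 1 ∧ c = 2) ∨ (a = 1 ∧ b = 2 ∧ c = 3) := by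
  obtain ⟨p, hp⟩ := dc
  have hp2 : 2 ≤ p := by
    rcases p with _ | _ | p
    · omega
    · omega
    · omega
  have h3c : Q ≤ 3 * c := by omega
  have hp3 : p ≤ 3 := by
    have : c * p ≤ c * 3 := by rw [← hp]; omega
    exact Nat.le_of_mul_le_mul_left this (by omega)
  interval_cases p
  · -- Q = 2c, so a + b = c
    obtain ⟨n, hn⟩ := db
    have hn2 : 2 ≤ n := by
      rcases n with _ | _ | n
      · omega
      · omega
      · omega
    have h4b : Q ≤ 4 * b := by omega
    have hn4 : n ≤ 4 := by
      have : b * n ≤ b * 4 := by rw [← hn]; omega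
      exact Nat.le_of_mul_le_mul_left this (by omega)
    interval_cases n
    · omega
    · -- Q = 3b = 2c : (a,b,c) = (t,2t,3t)
      have ha1 : a = 1 := H a dvd_rfl ⟨2, by omega⟩ ⟨3, by omega⟩
      right; omega
    · -- Q = 4b = 2c : (a,b,c) = (t,t,2t)
      have ha1 : a = 1 := H a dvd_rfl ⟨1, by omega⟩ ⟨2, by omega⟩
      left; omega
  · -- Q = 3c, forces a = b = c, Q odd
    have ha1 : a = 1 := H a dvd_rfl ⟨1, by omega⟩ ⟨1, by omega⟩
    omega

/-- If `gcd(b₁,b₂,b₃) = 1`, `Q = b₁+b₂+b₃` is even, and the sum (with multiplicity) of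
those `bᵢ` dividing `Q` is at least `3Q/4`, then `{b₁,b₂,b₃}` is `{1,1,2}`, `{1,2,3}`,
or `{3,4,5}` as a multiset. -/
theorem even_Q_triples_with_three_quarters_nonsingular
    (b₁ b₂ b₃ : ℕ) (h₁ : 0 < b₁) (h₂ : 0 < b₂) (h₃ : 0 < b₃)
    (hgcd : Nat.gcd (Nat.gcd b₁ b₂) b₃ = 1)
    (heven : 2 ∣ (b₁ + b₂ + b₃))
    (hsum : 4 * ((if b₁ ∣ (b₁ + b₂ + b₃) then b₁ else 0) +
                 (if b₂ ∣ (b₁ + b₂ + b₃) then b₂ else 0) +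
                 (if b₃ ∣ (b₁ + b₂ + b₃) then b₃ else 0)) ≥ 3 * (b₁ + b₂ + b₃)) :
    ({b₁, b₂, b₃} : Multiset ℕ) = {1, 1, 2} ∨
    ({b₁, b₂, b₃} : Multiset ℕ) = {1, 2, 3} ∨
    ({b₁, b₂, b₃} : Multiset ℕ) = {3, 4, 5} := by
  have H : ∀ d, d ∣ b₁ → d ∣ b₂ → d ∣ b₃ → d = 1 := by
    intro d hd1 hd2 hd3
    exact Nat.dvd_one.mp (hgcd ▸ Nat.dvd_gcd (Nat.dvd_gcd hd1 hd2) hd3)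
  by_cases d₁ : b₁ ∣ (b₁ + b₂ + b₃) <;>
  by_cases d₂ : b₂ ∣ (b₁ + b₂ + b₃) <;>
  by_cases d₃ : b₃ ∣ (b₁ + b₂ + b₃) <;>
  simp only [if_pos, if_neg, d₁, d₂, d₃, if_true, if_false] at hsum
  · -- all three divide
    have key : ∀ (a b c : ℕ), 0 < a → a ≤ b → b ≤ c → a + b + c = b₁ + b₂ + b₃ →
        b ∣ (b₁ + b₂ + b₃) → c ∣ (b₁ + b₂ + b₃) → (∀ d, d ∣ a → d ∣ b → d ∣ c → d = 1) →
        (a = 1 ∧ b = 1 ∧ c = 2) ∨ (a = 1 ∧ b = 2 ∧ c = 3) := by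
      intro a b c ha hab hbc hQ hdb hdc Habc
      exact aux_ordered (b₁ + b₂ + b₃) a b c ha hab hbc hQ heven hdb hdc Habc
    rcases le_total b₁ b₂ with h12 | h12 <;>
    rcases le_total b₂ b₃ with h23 | h23 <;>
    rcases le_total b₁ b₃ with h13 | h13
    · rcases key b₁ b₂ b₃ h₁ h12 h23 (by omega) d₂ d₃ H with ⟨e1,e2,e3⟩|⟨e1,e2,e3⟩ <;>
        subst e1 <;> subst e2 <;> subst e3 <;> decide
    · rcases key b₁ b₂ b₃ h₁ h12 h23 (by omega) d₂ d₃ H with ⟨e1,e2,e3⟩|⟨e1,e2,e3⟩ <;>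
        subst e1 <;> subst e2 <;> subst e3 <;> decide
    · rcases key b₁ b₃ b₂ h₁ h13 h23 (by omega) d₃ d₂
        (fun d u v w => H d u w v) with ⟨e1,e2,e3⟩|⟨e1,e2,e3⟩ <;>
        subst e1 <;> subst e2 <;> subst e3 <;> decide
    · rcases key b₃ b₁ b₂ h₃ h13 h12 (by omega) d₁ d₂
        (fun d u v w => H d v w u) with ⟨e1,e2,e3⟩|⟨e1,e2,e3⟩ <;>
        subst e1 <;> subst e2 <;> subst e3 <;> decide
    · rcases key b₂ b₁ b₃ h₂ h12 h13 (by omega) d₁ d₃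
        (fun d u v w => H d v u w) with ⟨e1,e2,e3⟩|⟨e1,e2,e3⟩ <;>
        subst e1 <;> subst e2 <;> subst e3 <;> decide
    · rcases key b₂ b₃ b₁ h₂ h23 h13 (by omega) d₃ d₁
        (fun d u v w => H d w u v) with ⟨e1,e2,e3⟩|⟨e1,e2,e3⟩ <;>
        subst e1 <;> subst e2 <;> subst e3 <;> decide
    · rcases key b₃ b₂ b₁ h₃ h23 h12 (by omega) d₂ d₁
        (fun d u v w => H d w v u) with ⟨e1,e2,e3⟩|⟨e1,e2,e3⟩ <;>
        subst e1 <;> subst e2 <;> subst e3 <;> decide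
    · rcases key b₃ b₂ b₁ h₃ h23 h12 (by omega) d₂ d₁
        (fun d u v w => H d w v u) with ⟨e1,e2,e3⟩|⟨e1,e2,e3⟩ <;>
        subst e1 <;> subst e2 <;> subst e3 <;> decide
  · exact absurd (aux_no_two (b₁+b₂+b₃) b₁ b₂ b₃ h₁ h₂ h₃ (by omega) d₁ d₂ d₃ (by omega)) id
  · exact absurd (aux_no_two (b₁+b₂+b₃) b₁ b₃ b₂ h₁ h₃ h₂ (by omega) d₁ d₃ d₂ (by omega)) id
  · exact absurd (aux_no_one (b₁+b₂+b₃) b₁ b₂ b₃ h₂ h₃ (by omega) d₁ (by omega)) id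
  · exact absurd (aux_no_two (b₁+b₂+b₃) b₂ b₃ b₁ h₂ h₃ h₁ (by omega) d₂ d₃ d₁ (by omega)) id
  · exact absurd (aux_no_one (b₁+b₂+b₃) b₂ b₁ b₃ h₁ h₃ (by omega) d₂ (by omega)) id
  · exact absurd (aux_no_one (b₁+b₂+b₃) b₃ b₁ b₂ h₁ h₂ (by omega) d₃ (by omega)) id
  · omega
end

section
/- Let b₁, b₂, b₃ be positive integers with gcd(b₁,b₂,b₃) = 1, set Q = b₁ + b₂ + b₃, and suppose Q is odd. If b₁ ∣ Q, b₂ ∣ Q, b₃ ∤ Q, and 2·b₃ ≤ Q, then the multiset {b₁, b₂, b₃} equals {3,5,7}. -/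
/-- If `gcd(b₁,b₂,b₃) = 1`, `Q = b₁+b₂+b₃` is odd, `b₁ ∣ Q`, `b₂ ∣ Q`, `b₃ ∤ Q`,
and `2b₃ ≤ Q`, then `{b₁,b₂,b₃} = {3,5,7}` as multisets. -/
theorem odd_Q_one_singular_class_is_357
    (b₁ b₂ b₃ : ℕ) (h₁ : 0 < b₁) (h₂ : 0 < b₂) (h₃ : 0 < b₃)
    (hgcd : Nat.gcd (Nat.gcd b₁ b₂) b₃ = 1)
    (hodd : Odd (b₁ + b₂ + b₃))
    (hd₁ : b₁ ∣ (b₁ + b₂ + b₃)) (hd₂ : b₂ ∣ (b₁ + b₂ + b₃)) (hd₃ : ¬ b₃ ∣ (b₁ + b₂ + b₃))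
    (hb₃ : 2 * b₃ ≤ b₁ + b₂ + b₃) :
    ({b₁, b₂, b₃} : Multiset ℕ) = {3, 5, 7} := by
  obtain ⟨m, hm⟩ := hd₁
  obtain ⟨n, hn⟩ := hd₂
  have hmodd : m % 2 = 1 := Nat.odd_iff.mp (Nat.odd_mul.mp (hm ▸ hodd)).2
  have hnodd : n % 2 = 1 := Nat.odd_iff.mp (Nat.odd_mul.mp (hn ▸ hodd)).2
  rw [Nat.odd_iff] at hodd
  have hm3 : 3 ≤ m := by
    by_contra h
    push_neg at h
    interval_cases m <;> omega
  have hn3 : 3 ≤ n := by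
    by_contra h
    push_neg at h
    interval_cases n <;> omega
  have hQle : b₁ + b₂ + b₃ ≤ 2 * b₁ + 2 * b₂ := by omega
  have key : m * n ≤ 2 * m + 2 * n := by
    nlinarith [hm, hn, hQle, h₁, h₂, h₃]
  have hm6 : m ≤ 5 := by
    by_contra h
    push_neg at h
    have hm7 : 7 ≤ m := by omega
    have p1 : 7 * n ≤ m * n := Nat.mul_le_mul_right n hm7
    have p2 : m * 3 ≤ m * n := Nat.mul_le_mul_left m hn3
    linarith
  have hn6 : n ≤ 5 := by
    by_contra h
    push_neg at h
    have hn7 : 7 ≤ n := by omega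
    have p1 : m * 7 ≤ m * n := Nat.mul_le_mul_left m hn7
    have p2 : 3 * n ≤ m * n := Nat.mul_le_mul_right n hm3
    linarith
  have hm35 : m = 3 ∨ m = 5 := by omega
  have hn35 : n = 3 ∨ n = 5 := by omega
  rcases hm35 with rfl | rfl <;> rcases hn35 with rfl | rfl
  · -- m = 3, n = 3 : then b₃ = b₁ divides Q
    exact absurd ⟨3, by omega⟩ hd₃
  · -- m = 3, n = 5 : b₁ = 5k, b₂ = 3k, b₃ = 7k
    have h3 : 3 ∣ b₂ := by omega
    obtain ⟨k, hk⟩ := h3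
    have hb1 : b₁ = 5 * k := by omega
    have hb3 : b₃ = 7 * k := by omega
    have hk1 : k = 1 := by
      rw [hb1, hk, hb3] at hgcd
      rw [Nat.gcd_mul_right, Nat.gcd_mul_right] at hgcd
      simpa using hgcd
    subst hk1
    rw [hb1, hk, hb3]
    decide
  · -- m = 5, n = 3 : b₁ = 3k, b₂ = 5k, b₃ = 7k
    have h3 : 3 ∣ b₁ := by omega
    obtain ⟨k, hk⟩ := h3
    have hb2 : b₂ = 5 * k := by omega
    have hb3 : b₃ = 7 * k := by omega
    have hk1 : k = 1 := by
      rw [hb2, hk, hb3] at hgcd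
      rw [Nat.gcd_mul_right, Nat.gcd_mul_right] at hgcd
      simpa using hgcd
    subst hk1
    rw [hb2, hk, hb3]
  · -- m = 5, n = 5 : contradicts key
    omega
end
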